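/- arXiv:1307.6842 — 14 statements merged into one kernel-verified Lean document; each statement's English description precedes it below -/
import Mathlib

section
/- Let p be a nonzero real polynomial whose nonzero coefficients, listed in order of increasing exponent, are a₀, a₁, …, aₙ, and let k be the number of indices i with aᵢ·aᵢ₊₁ < 0 (the number of sign variations). Let P be the number of positive real roots of p counted with multiplicity. Then P ≤ k and k − P is even. -/
namespace Descartes

/-- number of adjacent sign changes in a list -/
noncomputable def chs : List ℝ → ℕ
  | [] => 0
  | [_] => 0
  | a :: b :: t => (if a * b < 0 then 1 else 0) + chs (b :: t)

/-- contribution of a prepended element -/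
noncomputable def hs (x : ℝ) : List ℝ → ℕ
  | [] => 0
  | y :: _ => if x * y < 0 then 1 else 0

lemma hs_nil (x : ℝ) : hs x [] = 0 := rfl

lemma hs_cons (x y : ℝ) (t : List ℝ) : hs x (y :: t) = if x * y < 0 then 1 else 0 := rfl

lemma chs_cons (x : ℝ) (l : List ℝ) : chs (x :: l) = hs x l + chs l := by
  cases l <;> simp [chs, hs]

lemma hs_le_one (x : ℝ) (l : List ℝ) : hs x l ≤ 1 := by
  cases l <;> simp [hs]; split <;> simp

lemma sign_trans {u v : ℝ} (huv : 0 < u * v) (r : ℝ) : (u * r < 0 ↔ v * r < 0) := by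
  constructor <;> intro h <;> nlinarith [sq_nonneg r, sq_nonneg u, sq_nonneg v]

lemma hs_congr {u v : ℝ} (huv : 0 < u * v) (l : List ℝ) : hs u l = hs v l := by
  cases l with
  | nil => rfl
  | cons y t => simp only [hs]; rw [if_congr (sign_trans huv y) rfl rfl]

/-- filter out zeros -/
noncomputable def F (l : List ℝ) : List ℝ := l.filter (fun x => x ≠ 0)

noncomputable def V (l : List ℝ) : ℕ := chs (F l)

lemma F_cons_zero (l : List ℝ) : F ((0:ℝ) :: l) = F l := by simp [F]

lemma F_cons {x : ℝ} (hx : x ≠ 0) (l : List ℝ) : F (x :: l) = x :: F l := by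
  simp [F, List.filter_cons, hx]

lemma F_nonzero {x : ℝ} {l : List ℝ} (h : x ∈ F l) : x ≠ 0 := by
  simp [F] at h; exact h.2

lemma V_cons_zero (l : List ℝ) : V ((0:ℝ) :: l) = V l := by simp [V, F_cons_zero]

lemma V_cons {x : ℝ} (hx : x ≠ 0) (l : List ℝ) : V (x :: l) = hs x (F l) + V l := by
  simp [V, F_cons hx, chs_cons]

end Descartes
namespace Descartes

/-- add x to the head of a list (or create [x]) -/
noncomputable def addHead (x : ℝ) : List ℝ → List ℝ
  | [] => [x]
  | y :: t => (x + y) :: t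

/-- coefficients of (X - c) * q, given coefficients of q (lowest first) -/
noncomputable def step (c : ℝ) : List ℝ → List ℝ
  | [] => []
  | a :: t => (-(c * a)) :: addHead a (step c t)

lemma step_ne_nil (c a : ℝ) (t : List ℝ) : step c (a :: t) ≠ [] := by simp [step]

lemma addHead_zero {l : List ℝ} (hl : l ≠ []) : addHead 0 l = l := by
  cases l with
  | nil => simp at hl
  | cons y t => simp [addHead]

lemma step_all_zero {c : ℝ} : ∀ {T : List ℝ}, (∀ x ∈ T, x = 0) → ∀ y ∈ step c T, y = 0 := by
  intro T
  induction T with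
  | nil => intro _ y hy; simp [step] at hy
  | cons a t ih =>
    intro h y hy
    have ha : a = 0 := h a (by simp)
    have ht : ∀ x ∈ t, x = 0 := fun x hx => h x (by simp [hx])
    simp only [step] at hy
    rcases List.mem_cons.1 hy with h1 | h1
    · rw [h1, ha]; ring
    · rcases ts : step c t with _ | ⟨z, zs⟩
      · rw [ts] at h1; simp [addHead] at h1; rw [h1, ha]
      · rw [ts] at h1; simp [addHead] at h1
        have hz : z = 0 := ih ht z (by rw [ts]; simp)
        rcases h1 with h1 | h1
        · rw [h1, ha, hz]; ring
        · exact ih ht y (by rw [ts]; exact List.mem_cons_of_mem _ h1)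

lemma F_eq_nil {l : List ℝ} (h : ∀ x ∈ l, x = 0) : F l = [] := by
  simp [F, List.filter_eq_nil_iff]; intro a ha; exact h a ha

/-- first nonzero entry of step c Q is -c times that of Q -/
lemma head_F_step {c : ℝ} (hc : c ≠ 0) :
    ∀ T : List ℝ, (F (step c T)).head? = (F T).head?.map (fun y => -(c * y)) := by
  intro T
  induction T with
  | nil => simp [step, F]
  | cons a t ih =>
    by_cases ha : a = 0
    · subst ha
      rw [F_cons_zero]
      simp only [step]
      rw [show -(c * (0:ℝ)) = 0 by ring, F_cons_zero]
      cases t with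
      | nil => simp [step, addHead, F]
      | cons b t' =>
        rw [addHead_zero (step_ne_nil c b t')]
        exact ih
    · have hca : -(c * a) ≠ 0 := by
        simp only [neg_ne_zero]; exact mul_ne_zero hc ha
      rw [F_cons ha]
      simp only [step]
      rw [F_cons hca]
      simp

end Descartes
namespace Descartes

lemma step_cons (c a : ℝ) (t : List ℝ) :
    step c (a :: t) = -(c * a) :: addHead a (step c t) := rfl

lemma step_ne_nil' {c : ℝ} {T : List ℝ} (h : T ≠ []) : step c T ≠ [] := by
  cases T with
  | nil => simp at h
  | cons b t => exact step_ne_nil c b t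

lemma key {c : ℝ} (hc : 0 < c) :
    ∀ Q : List ℝ, (∃ x ∈ Q, x ≠ 0) → V Q + 1 ≤ V (step c Q) := by
  intro Q
  induction Q with
  | nil => rintro ⟨x, hx, _⟩; simp at hx
  | cons a T ih =>
    rintro ⟨x, hx, hxne⟩
    by_cases ha : a = 0
    · subst ha
      have hT : ∃ y ∈ T, y ≠ 0 := by
        rcases List.mem_cons.1 hx with h | h
        · exact absurd h hxne
        · exact ⟨x, h, hxne⟩
      have hTne : T ≠ [] := by
        rintro rfl; rcases hT with ⟨y, hy, _⟩; simp at hy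
      rw [V_cons_zero, step_cons, show -(c * (0:ℝ)) = 0 by ring, V_cons_zero,
        addHead_zero (step_ne_nil' hTne)]
      exact ih hT
    · have hca : -(c*a) ≠ 0 := neg_ne_zero.2 (mul_ne_zero (ne_of_gt hc) ha)
      have haa : (0:ℝ) < a * a := mul_self_pos.2 ha
      have hcaa : -(c*a) * a < 0 := by nlinarith
      rcases T with _ | ⟨t₀, T'⟩
      · -- Q = [a]
        have : step c [a] = [-(c*a), a] := by simp [step, addHead]
        rw [this, V_cons hca, F_cons ha, V_cons ha]
        simp only [F, List.filter_nil, hs, V, chs]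
        rw [if_pos hcaa]
      · by_cases hT : ∃ y ∈ t₀ :: T', y ≠ 0
        · -- main case : tail has a nonzero entry
          have hIH := ih hT
          by_cases ht₀ : t₀ = 0
          · -- t₀ = 0
            subst ht₀
            have hT' : ∃ y ∈ T', y ≠ 0 := by
              rcases hT with ⟨y, hy, hyne⟩
              rcases List.mem_cons.1 hy with h | h
              · exact absurd h hyne
              · exact ⟨y, h, hyne⟩
            have hT'ne : T' ≠ [] := by
              rintro rfl; rcases hT' with ⟨y, hy, _⟩; simp at hy
            -- F T' nonempty, get its head ts
            rcases hFT' : F T' with _ | ⟨ts, R₀⟩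
            · exfalso
              rcases hT' with ⟨y, hy, hyne⟩
              have : y ∈ F T' := by
                simp [F, List.mem_filter]; exact ⟨hy, hyne⟩
              rw [hFT'] at this; simp at this
            have hts : ts ≠ 0 := F_nonzero (l := T') (by rw [hFT']; simp)
            have hats : a * ts ≠ 0 := mul_ne_zero ha hts
            -- head of F (step c T')
            have hhead := head_F_step (ne_of_gt hc) T'
            rw [hFT'] at hhead
            rcases hFs : F (step c T') with _ | ⟨w, R⟩
            · rw [hFs] at hhead; simp at hhead
            · rw [hFs] at hhead
              simp only [List.head?_cons, Option.map_some] at hhead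
              have hw : w = -(c * ts) := by
                exact Option.some.inj hhead
              -- left side first
              rw [V_cons ha, show F ((0:ℝ)::T') = F T' from F_cons_zero T', hFT']
              -- rewrite right side
              rw [step_cons, step_cons, show -(c * (0:ℝ)) = 0 by ring,
                addHead_zero (step_ne_nil' hT'ne)]
              rw [show addHead a ((0:ℝ) :: step c T') = (a + 0) :: step c T' from rfl,
                show a + (0:ℝ) = a by ring]
              rw [V_cons hca, F_cons ha, V_cons ha, hFs]
              -- IH rewriting : V (step c (0 :: T')) = V (step c T')
              rw [step_cons, show -(c * (0:ℝ)) = 0 by ring, V_cons_zero,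
                addHead_zero (step_ne_nil' hT'ne), V_cons_zero] at hIH
              -- now arithmetic
              rw [V_cons_zero]
              simp only [hs, hw]
              rw [if_pos hcaa]
              rcases lt_trichotomy (a * ts) 0 with hlt | heq | hgt
              · rw [if_pos hlt, if_neg (by nlinarith : ¬ a * -(c*ts) < 0)]
                omega
              · exact absurd heq hats
              · rw [if_neg (by nlinarith : ¬ a * ts < 0),
                  if_pos (by nlinarith : a * -(c*ts) < 0)]
                omega
          · -- t₀ ≠ 0
            have hct₀ : -(c*t₀) ≠ 0 := neg_ne_zero.2 (mul_ne_zero (ne_of_gt hc) ht₀)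
            have ht₀t₀ : (0:ℝ) < t₀ * t₀ := mul_self_pos.2 ht₀
            rw [step_cons] at hIH
            rw [step_cons, step_cons]
            rw [show addHead a (-(c * t₀) :: addHead t₀ (step c T'))
                = (a + -(c * t₀)) :: addHead t₀ (step c T') from rfl]
            set rest := addHead t₀ (step c T') with hrestdef
            rw [V_cons hct₀] at hIH
            rw [V_cons ha, F_cons ht₀, hs_cons, V_cons hca]
            by_cases hh0 : a + -(c * t₀) = 0
            · have hat₀ : (0:ℝ) < a * t₀ := by
                have hac : a = c * t₀ := by linarith
                rw [hac]; nlinarith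
              rw [hh0, F_cons_zero, V_cons_zero]
              rw [hs_congr (show (0:ℝ) < -(c*a) * -(c*t₀) by
                nlinarith [mul_pos (mul_pos hc hc) hat₀]) (F rest)]
              rw [if_neg (not_lt.2 hat₀.le)]
              omega
            · rw [F_cons hh0, hs_cons, V_cons hh0]
              rcases lt_trichotomy (a * (a + -(c * t₀))) 0 with hah | hah | hah
              · -- a and h opposite signs
                have hat₀ : (0:ℝ) < a * t₀ := by
                  rcases lt_trichotomy (a * t₀) 0 with h1 | h1 | h1
                  · nlinarith [mul_pos hc (neg_pos.2 h1)]
                  · exact absurd h1 (mul_ne_zero ha ht₀)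
                  · exact h1
                have hht₀ : (a + -(c * t₀)) * t₀ < 0 := by
                  nlinarith [mul_pos (neg_pos.2 hah) hat₀]
                rw [if_neg (show ¬ -(c*a) * (a + -(c * t₀)) < 0 by
                  nlinarith [mul_pos hc (neg_pos.2 hah)])]
                rw [hs_congr (show (0:ℝ) < (a + -(c * t₀)) * -(c*t₀) by
                  nlinarith [mul_pos hc (neg_pos.2 hht₀)]) (F rest)]
                rw [if_neg (not_lt.2 hat₀.le)]
                omega
              · exact absurd hah (mul_ne_zero ha hh0)
              · rw [if_pos (show -(c*a) * (a + -(c * t₀)) < 0 by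
                  nlinarith [mul_pos hc hah])]
                rcases lt_trichotomy (a * t₀) 0 with hat | hat | hat
                · have hht₀ : (a + -(c * t₀)) * t₀ < 0 := by
                    nlinarith [mul_pos hc (neg_pos.2 hat)]
                  rw [hs_congr (show (0:ℝ) < (a + -(c * t₀)) * -(c*t₀) by
                    nlinarith [mul_pos hc (neg_pos.2 hht₀)]) (F rest)]
                  rw [if_pos hat]
                  omega
                · exact absurd hat (mul_ne_zero ha ht₀)
                · rw [if_neg (not_lt.2 hat.le)]
                  have h1 := hs_le_one (-(c*t₀)) (F rest)
                  have h2 := hs_le_one (a + -(c * t₀)) (F rest)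
                  omega
        · -- tail all zero
          push_neg at hT
          have hFT : F (t₀ :: T') = [] := F_eq_nil hT
          have ht₀ : t₀ = 0 := hT t₀ (by simp)
          have hrest0 : ∀ y ∈ addHead t₀ (step c T'), y = 0 := by
            intro y hy
            have hz := step_all_zero (c := c)
              (fun z hz' => hT z (List.mem_cons_of_mem _ hz'))
            rcases hs' : step c T' with _ | ⟨z, zs⟩
            · rw [hs', ht₀] at hy; simp [addHead] at hy; rw [hy]
            · rw [hs'] at hy; simp [addHead] at hy
              rcases hy with hy | hy
              · have hz0 : z = 0 := hz z (by rw [hs']; simp)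
                rw [hy, ht₀, hz0]; ring
              · exact hz y (by rw [hs']; exact List.mem_cons_of_mem _ hy)
          have hVT : V (t₀ :: T') = 0 := by rw [V, hFT]; rfl
          rw [V_cons ha, hFT, hVT]
          rw [step_cons, step_cons]
          rw [show addHead a (-(c * t₀) :: addHead t₀ (step c T'))
              = (a + -(c * t₀)) :: addHead t₀ (step c T') from rfl]
          rw [show a + -(c * t₀) = a by rw [ht₀]; ring]
          have hFrest : F (addHead t₀ (step c T')) = [] := F_eq_nil hrest0
          rw [V_cons hca, F_cons ha, V_cons ha, hFrest]
          simp only [hs]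
          rw [if_pos hcaa]
          have hVrest : V (addHead t₀ (step c T')) = 0 := by rw [V, hFrest]; rfl
          rw [hVrest]

end Descartes
namespace Descartes
open Polynomial

noncomputable def coeffList (p : ℝ[X]) : List ℝ :=
  (List.range (p.natDegree + 1)).map p.coeff

lemma coeffList_ne_nil (p : ℝ[X]) : coeffList p ≠ [] := by
  simp [coeffList, List.range_succ]

lemma coeffList_getD (p : ℝ[X]) (m : ℕ) : (coeffList p).getD m 0 = p.coeff m := by
  rcases lt_or_ge m (p.natDegree + 1) with h | h
  · rw [coeffList, List.getD_eq_getElem _ _ (by simpa using h)]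
    simp
  · rw [coeffList, List.getD_eq_default _ _ (by simpa using h)]
    exact (p.coeff_eq_zero_of_natDegree_lt (by omega)).symm

lemma step_length (c : ℝ) : ∀ L : List ℝ, L ≠ [] → (step c L).length = L.length + 1 := by
  intro L
  induction L with
  | nil => simp
  | cons a t ih =>
    intro _
    rw [step_cons]
    cases t with
    | nil => simp [step, addHead]
    | cons b t' =>
      have h := ih (by simp)
      rcases hs' : step c (b::t') with _ | ⟨z, zs⟩
      · exact absurd hs' (step_ne_nil c b t')
      · rw [hs'] at h
        simp only [List.length_cons] at h ⊢
        simp only [addHead, List.length_cons]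
        omega

lemma step_getD_zero (c : ℝ) (L : List ℝ) :
    (step c L).getD 0 0 = -(c * L.getD 0 0) := by
  cases L with
  | nil => simp [step]
  | cons a t => rw [step_cons]; simp

lemma step_getD_succ (c : ℝ) : ∀ (L : List ℝ) (m : ℕ),
    (step c L).getD (m+1) 0 = L.getD m 0 - c * L.getD (m+1) 0 := by
  intro L
  induction L with
  | nil => intro m; simp [step]
  | cons a t ih =>
    intro m
    cases t with
    | nil =>
      cases m with
      | zero => simp [step, addHead]
      | succ m' => simp [step, addHead]
    | cons b t' =>
      have e1 : step c (a :: b :: t') = -(c*a) :: (a + -(c*b)) :: addHead b (step c t') := rfl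
      rw [e1]
      cases m with
      | zero => simp; ring
      | succ m' =>
        have e2 : ((-(c*a) :: (a + -(c*b)) :: addHead b (step c t')) : List ℝ).getD (m'+2) 0
            = (addHead b (step c t')).getD m' 0 := by simp
        have e3 : (step c (b :: t')).getD (m'+1) 0 = (addHead b (step c t')).getD m' 0 := rfl
        rw [e2, ← e3, ih m']
        simp

lemma coeffList_step {q : ℝ[X]} (hq : q ≠ 0) (c : ℝ) :
    coeffList ((X - C c) * q) = step c (coeffList q) := by
  have hXc : (X - C c) ≠ 0 := X_sub_C_ne_zero c
  have hd : ((X - C c) * q).natDegree = q.natDegree + 1 := by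
    rw [natDegree_mul hXc hq, natDegree_X_sub_C]; ring
  have hlen : (coeffList ((X - C c)*q)).length = (step c (coeffList q)).length := by
    rw [step_length _ _ (coeffList_ne_nil q)]
    simp [coeffList, hd]
  apply List.ext_getElem hlen
  intro n h1 h2
  have hL : ∀ (l : List ℝ) (n : ℕ) (h : n < l.length), l[n] = l.getD n 0 :=
    fun l n h => (List.getD_eq_getElem l 0 h).symm
  rw [hL _ _ h1, hL _ _ h2, coeffList_getD]
  cases n with
  | zero =>
    rw [step_getD_zero, coeffList_getD, mul_coeff_zero]
    simp
  | succ m =>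
    rw [step_getD_succ, coeffList_getD, coeffList_getD, sub_mul, coeff_sub,
      coeff_X_mul, coeff_C_mul]

lemma V_coeffList_mul {c : ℝ} (hc : 0 < c) {q : ℝ[X]} (hq : q ≠ 0) :
    V (coeffList q) + 1 ≤ V (coeffList ((X - C c) * q)) := by
  rw [coeffList_step hq c]
  apply key hc
  refine ⟨q.coeff q.natDegree, ?_, ?_⟩
  · simp only [coeffList, List.mem_map]
    exact ⟨q.natDegree, by simp, rfl⟩
  · exact leadingCoeff_ne_zero.2 hq

lemma card_le_V : ∀ (m : ℕ) (p : ℝ[X]), p ≠ 0 →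
    (p.roots.filter (fun x => 0 < x)).card = m → m ≤ V (coeffList p) := by
  intro m
  induction m with
  | zero => intro p _ _; omega
  | succ m ih =>
    intro p hp hc
    obtain ⟨r, hr⟩ : ∃ r, r ∈ p.roots.filter (fun x => (0:ℝ) < x) :=
      Multiset.card_pos_iff_exists_mem.1 (by omega)
    have hrpos : (0:ℝ) < r := (Multiset.mem_filter.1 hr).2
    have hrroot : r ∈ p.roots := (Multiset.mem_filter.1 hr).1
    have hroot : p.IsRoot r := isRoot_of_mem_roots hrroot
    obtain ⟨q, hq⟩ := dvd_iff_isRoot.2 hroot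
    have hq0 : q ≠ 0 := by rintro rfl; rw [mul_zero] at hq; exact hp hq
    have hroots : p.roots = r ::ₘ q.roots := by
      rw [hq, roots_mul (hq ▸ hp), roots_X_sub_C, Multiset.singleton_add]
    have hcard : (q.roots.filter (fun x => (0:ℝ) < x)).card = m := by
      rw [hroots, Multiset.filter_cons, if_pos hrpos] at hc
      simp at hc
      omega
    calc m + 1 ≤ V (coeffList q) + 1 := Nat.succ_le_succ (ih q hq0 hcard)
      _ ≤ V (coeffList ((X - C r) * q)) := V_coeffList_mul hrpos hq0
      _ = V (coeffList p) := by rw [← hq]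

end Descartes
namespace Descartes
open Polynomial

section Specific

variable {n : ℕ} {e : Fin (n + 1) → ℕ} {a : Fin (n + 1) → ℝ}

lemma coeff_sum (m : ℕ) :
    (∑ i : Fin (n+1), C (a i) * X ^ (e i)).coeff m
      = ∑ i : Fin (n+1), if e i = m then a i else 0 := by
  rw [finset_sum_coeff]
  apply Finset.sum_congr rfl
  intro i _
  rw [coeff_C_mul, coeff_X_pow, mul_ite, mul_one, mul_zero]
  simp [eq_comm]

lemma coeff_apply (he : StrictMono e) (i : Fin (n+1)) :
    (∑ i : Fin (n+1), C (a i) * X ^ (e i)).coeff (e i) = a i := by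
  rw [coeff_sum]
  rw [Finset.sum_eq_single i]
  · simp
  · intro j _ hji
    rw [if_neg (he.injective.ne hji)]
  · intro h; exact absurd (Finset.mem_univ i) h

lemma coeff_zero_of_notin (he : StrictMono e) {m : ℕ} (h : ∀ i, m ≠ e i) :
    (∑ i : Fin (n+1), C (a i) * X ^ (e i)).coeff m = 0 := by
  rw [coeff_sum]
  apply Finset.sum_eq_zero
  intro i _
  rw [if_neg (fun hc => h i hc.symm)]

lemma p_ne_zero (he : StrictMono e) (ha : ∀ i, a i ≠ 0) :
    (∑ i : Fin (n+1), C (a i) * X ^ (e i)) ≠ 0 := by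
  intro h
  have hc := coeff_apply (a := a) he 0
  rw [h, Polynomial.coeff_zero] at hc
  exact ha 0 hc.symm

lemma natDeg_eq (he : StrictMono e) (ha : ∀ i, a i ≠ 0) :
    (∑ i : Fin (n+1), C (a i) * X ^ (e i)).natDegree = e (Fin.last n) := by
  apply le_antisymm
  · apply natDegree_sum_le_of_forall_le
    intro i _
    exact (natDegree_C_mul_X_pow_le (a i) (e i)).trans (he.monotone (Fin.le_last i))
  · exact le_natDegree_of_ne_zero (by rw [coeff_apply he]; exact ha _)

lemma leadingCoeff_eq (he : StrictMono e) (ha : ∀ i, a i ≠ 0) :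
    (∑ i : Fin (n+1), C (a i) * X ^ (e i)).leadingCoeff = a (Fin.last n) := by
  rw [leadingCoeff, natDeg_eq he ha, coeff_apply he]

lemma natTrailingDeg_eq (he : StrictMono e) (ha : ∀ i, a i ≠ 0) :
    (∑ i : Fin (n+1), C (a i) * X ^ (e i)).natTrailingDegree = e 0 := by
  apply le_antisymm
  · exact natTrailingDegree_le_of_ne_zero (by rw [coeff_apply he]; exact ha _)
  · apply le_natTrailingDegree (p_ne_zero he ha)
    intro m hm
    apply coeff_zero_of_notin he
    intro i hmi
    have : e 0 ≤ e i := he.monotone (Fin.zero_le i)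
    omega

lemma trailingCoeff_eq (he : StrictMono e) (ha : ∀ i, a i ≠ 0) :
    (∑ i : Fin (n+1), C (a i) * X ^ (e i)).trailingCoeff = a 0 := by
  rw [trailingCoeff, natTrailingDeg_eq he ha, coeff_apply he]

lemma F_coeffList_eq (he : StrictMono e) (ha : ∀ i, a i ≠ 0) :
    F (coeffList (∑ i : Fin (n+1), C (a i) * X ^ (e i))) = List.ofFn a := by
  set p : ℝ[X] := ∑ i : Fin (n+1), C (a i) * X ^ (e i) with hp
  have hrange : (List.range (p.natDegree + 1)).filter
      ((fun x : ℝ => decide (x ≠ 0)) ∘ p.coeff) = List.ofFn e := by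
    refine (fun hp h1 h2 => List.Perm.eq_of_pairwise' (r := ((· < ·) : ℕ → ℕ → Prop)) h1 h2 hp) ?_ ?_ ?_
    · rw [List.perm_ext_iff_of_nodup (List.Nodup.filter _ List.nodup_range)
        (List.nodup_ofFn.2 he.injective)]
      intro m
      simp only [List.mem_filter, List.mem_range, List.mem_ofFn, Function.comp_apply,
        decide_eq_true_eq, Set.mem_range]
      constructor
      · rintro ⟨hlt, hne⟩
        by_contra hno
        push_neg at hno
        exact hne (coeff_zero_of_notin he (fun i h => hno i h.symm))
      · rintro ⟨i, rfl⟩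
        refine ⟨?_, by rw [coeff_apply he]; exact ha i⟩
        have : e i ≤ e (Fin.last n) := he.monotone (Fin.le_last i)
        rw [natDeg_eq he ha]
        omega
    · exact List.Pairwise.filter _ List.pairwise_lt_range
    · exact List.pairwise_ofFn.2 (fun i j h => he h)
  rw [F, coeffList, List.filter_map, hrange, List.map_ofFn]
  congr 1
  funext i
  exact coeff_apply he i

end Specific

lemma hs_ofFn (x : ℝ) {m : ℕ} (b : Fin (m+1) → ℝ) :
    hs x (List.ofFn b) = if x * b 0 < 0 then 1 else 0 := by
  rw [List.ofFn_succ, hs_cons]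

lemma chs_ofFn_eq : ∀ (n : ℕ) (a : Fin (n+1) → ℝ),
    chs (List.ofFn a) = ∑ i : Fin n, if a i.castSucc * a i.succ < 0 then 1 else 0 := by
  intro n
  induction n with
  | zero => intro a; simp [chs]
  | succ m ih =>
    intro a
    rw [List.ofFn_succ, chs_cons, hs_ofFn, ih (fun i => a i.succ), Fin.sum_univ_succ]
    simp [Fin.succ_castSucc, -Fin.castSucc_succ]; rfl

lemma sign_ite_parity {x y z : ℝ} (hx : x ≠ 0) (hy : y ≠ 0) (hz : z ≠ 0) :
    ((if x*y < 0 then 1 else 0) + (if y*z < 0 then 1 else 0)) % 2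
      = (if x*z < 0 then 1 else 0) % 2 := by
  rcases hx.lt_or_gt with hx1 | hx1 <;> rcases hy.lt_or_gt with hy1 | hy1 <;>
    rcases hz.lt_or_gt with hz1 | hz1 <;>
    simp [mul_neg_iff, hx1, hy1, hz1, hx1.not_gt, hy1.not_gt, hz1.not_gt, asymm hx1,
      asymm hy1, asymm hz1]

lemma chs_ofFn_parity : ∀ (n : ℕ) (a : Fin (n+1) → ℝ), (∀ i, a i ≠ 0) →
    chs (List.ofFn a) % 2 = (if a 0 * a (Fin.last n) < 0 then 1 else 0) % 2 := by
  intro n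
  induction n with
  | zero =>
    intro a ha
    have h0 : ¬ a 0 * a 0 < 0 := by nlinarith [mul_self_pos.2 (ha 0)]
    simp [chs, show Fin.last 0 = 0 from rfl, h0]
  | succ m ih =>
    intro a ha
    rw [List.ofFn_succ, chs_cons, hs_ofFn]
    have h1 := ih (fun i => a i.succ) (fun i => ha _)
    simp only [Fin.succ_last, Nat.succ_eq_add_one] at h1
    have h3 := sign_ite_parity (ha 0) (ha ((0 : Fin (m+1)).succ)) (ha (Fin.last (m+1)))
    omega

end Descartes
namespace Descartes
open Polynomial

lemma trailingCoeff_multiset_prod (s : Multiset (Polynomial ℝ)) :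
    s.prod.trailingCoeff = (s.map Polynomial.trailingCoeff).prod := by
  induction s using Multiset.induction with
  | empty => simp only [Multiset.map_zero, Multiset.prod_zero]; simp [trailingCoeff]
  | cons p s ih => simp [Multiset.prod_cons, Polynomial.trailingCoeff_mul, ih]

lemma multiset_prod_pos {s : Multiset ℝ} (h : ∀ x ∈ s, 0 < x) : 0 < s.prod := by
  induction s using Multiset.induction with
  | empty => simp
  | cons a s ih =>
    rw [Multiset.prod_cons]
    exact mul_pos (h a (by simp)) (ih (fun x hx => h x (by simp [hx])))

lemma trailingCoeff_X_sub_C (r : ℝ) :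
    (X - C r).trailingCoeff = if r = 0 then 1 else -r := by
  split_ifs with h
  · subst h
    simp only [map_zero, sub_zero]
    rw [trailingCoeff, natTrailingDegree_X, coeff_X_one]
  · have h0 : (X - C r).coeff 0 = -r := by simp
    have hnt : (X - C r).natTrailingDegree = 0 :=
      natTrailingDegree_eq_zero.2 (Or.inr (by rw [h0]; simpa using h))
    rw [trailingCoeff, hnt, h0]

lemma eval_zero_pos_of_pos_leading {q : Polynomial ℝ} (hlc : 0 < q.leadingCoeff)
    (hnr : ∀ x : ℝ, q.eval x ≠ 0) : 0 < q.eval 0 := by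
  by_cases hdeg : q.natDegree = 0
  · obtain ⟨c, rfl⟩ := natDegree_eq_zero.1 hdeg
    rw [leadingCoeff_C] at hlc
    simpa using hlc
  · have hdeg' : 0 < q.degree := natDegree_pos_iff_degree_pos.1 (Nat.pos_of_ne_zero hdeg)
    have ht := Polynomial.tendsto_atTop_of_leadingCoeff_nonneg q hdeg' hlc.le
    obtain ⟨x, hx⟩ := (ht.eventually_gt_atTop 0).exists
    by_contra hq0
    have hq0' : q.eval 0 < 0 := lt_of_le_of_ne (not_lt.1 hq0) (hnr 0)
    obtain ⟨y, hy⟩ := intermediate_value_univ (f := fun y => q.eval y) 0 x q.continuous_aeval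
      ⟨hq0'.le, hx.le⟩
    exact hnr y hy

lemma eval_zero_mul_leadingCoeff_pos {q : Polynomial ℝ} (hq : q ≠ 0)
    (hnr : ∀ x : ℝ, q.eval x ≠ 0) : 0 < q.eval 0 * q.leadingCoeff := by
  rcases (leadingCoeff_ne_zero.2 hq).lt_or_gt with h | h
  · have h1 : (0:ℝ) < (-q).leadingCoeff := by rw [leadingCoeff_neg]; linarith
    have h2 : ∀ x : ℝ, (-q).eval x ≠ 0 := by
      intro x
      rw [eval_neg, neg_ne_zero]
      exact hnr x
    have h3 := eval_zero_pos_of_pos_leading h1 h2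
    rw [eval_neg] at h3
    rw [leadingCoeff_neg] at h1
    nlinarith
  · exact mul_pos (eval_zero_pos_of_pos_leading h hnr) h

lemma odd_posroots_iff {p : Polynomial ℝ} (hp : p ≠ 0) :
    Multiset.card (p.roots.filter (fun x => 0 < x)) % 2 = 1 ↔
      p.trailingCoeff * p.leadingCoeff < 0 := by
  obtain ⟨q, hq⟩ := p.prod_multiset_X_sub_C_dvd
  set S : Polynomial ℝ := (p.roots.map (fun r => X - C r)).prod with hS
  have hSm : S.Monic := monic_multiset_prod_of_monic _ _ (fun r _ => monic_X_sub_C r)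
  have hq0 : q ≠ 0 := by rintro rfl; rw [mul_zero] at hq; exact hp hq
  have hqroots : q.roots = 0 := by
    have h1 : p.roots = S.roots + q.roots := by rw [hq, roots_mul (hq ▸ hp)]
    rw [hS, roots_multiset_prod_X_sub_C] at h1
    have h2 := congrArg Multiset.card h1
    rw [Multiset.card_add] at h2
    exact Multiset.card_eq_zero.1 (by omega)
  have hnr : ∀ x : ℝ, q.eval x ≠ 0 := by
    intro x hx
    have hmem : x ∈ q.roots := by rw [mem_roots hq0]; exact hx
    rw [hqroots] at hmem
    simp at hmem
  have hlead : p.leadingCoeff = q.leadingCoeff := by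
    rw [hq, leadingCoeff_mul, hSm.leadingCoeff, one_mul]
  have hqt : q.trailingCoeff = q.eval 0 := by
    rw [trailingCoeff, natTrailingDegree_eq_zero.2
      (Or.inr (by rw [coeff_zero_eq_eval_zero]; exact hnr 0)), coeff_zero_eq_eval_zero]
  have htrail : p.trailingCoeff = S.trailingCoeff * q.trailingCoeff := by
    rw [hq, trailingCoeff_mul]
  have hSt : S.trailingCoeff = (p.roots.map (fun r => if r = 0 then 1 else -r)).prod := by
    rw [hS, trailingCoeff_multiset_prod, Multiset.map_map]
    congr 1
    apply Multiset.map_congr rfl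
    intro r _
    exact trailingCoeff_X_sub_C r
  set Pos : Multiset ℝ := p.roots.filter (fun x => 0 < x) with hPos
  set Neg : Multiset ℝ := p.roots.filter (fun x => ¬ 0 < x) with hNeg
  have hsplit : Pos + Neg = p.roots := Multiset.filter_add_not _ _
  have hprod : (p.roots.map (fun r => if r = 0 then 1 else -r)).prod
      = (Pos.map (fun r => if r = 0 then 1 else -r)).prod *
        (Neg.map (fun r => if r = 0 then 1 else -r)).prod := by
    rw [← hsplit, Multiset.map_add, Multiset.prod_add]
  have hposmap : Pos.map (fun r => if r = 0 then 1 else -r) = Pos.map (fun r => -r) := by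
    apply Multiset.map_congr rfl
    intro r hr
    rw [if_neg (ne_of_gt (Multiset.mem_filter.1 hr).2)]
  have hposprod : (Pos.map (fun r => -r)).prod = (-1)^(Multiset.card Pos) * Pos.prod := by
    exact Multiset.prod_map_neg Pos
  have hPospos : (0:ℝ) < Pos.prod :=
    multiset_prod_pos (fun x hx => (Multiset.mem_filter.1 hx).2)
  have hNegpos : (0:ℝ) < (Neg.map (fun r => if r = 0 then 1 else -r)).prod := by
    apply multiset_prod_pos
    intro x hx
    rw [Multiset.mem_map] at hx
    obtain ⟨r, hr, rfl⟩ := hx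
    have hr2 : ¬ (0:ℝ) < r := (Multiset.mem_filter.1 hr).2
    split_ifs with h
    · norm_num
    · have : r < 0 := lt_of_le_of_ne (not_lt.1 hr2) h
      linarith
  set A : ℝ := Pos.prod * (Neg.map (fun r => if r = 0 then 1 else -r)).prod *
    (q.eval 0 * q.leadingCoeff) with hA
  have hApos : 0 < A :=
    mul_pos (mul_pos hPospos hNegpos) (eval_zero_mul_leadingCoeff_pos hq0 hnr)
  have heq : p.trailingCoeff * p.leadingCoeff = (-1)^(Multiset.card Pos) * A := by
    rw [htrail, hlead, hSt, hprod, hposmap, hposprod, hqt, hA]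
    ring
  rw [heq]
  rcases Nat.even_or_odd (Multiset.card Pos) with hPe | hPo
  · rw [hPe.neg_one_pow, one_mul]
    refine iff_of_false ?_ (not_lt.2 hApos.le)
    rw [Nat.even_iff] at hPe
    omega
  · rw [hPo.neg_one_pow]
    exact iff_of_true (Nat.odd_iff.1 hPo) (by linarith)

end Descartes

open Polynomial

/-- Descartes' rule of signs: if the nonzero coefficients of a real polynomial,
listed in order of increasing exponent, are `a 0, …, a n`, and `k` is the number
of sign variations, then the number `P` of positive roots counted with
multiplicity satisfies `P ≤ k` and `k - P` is even. -/
theorem descartes_rule_of_signs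
    (n : ℕ) (e : Fin (n + 1) → ℕ) (he : StrictMono e)
    (a : Fin (n + 1) → ℝ) (ha : ∀ i, a i ≠ 0)
    (p : Polynomial ℝ)
    (hp : p = ∑ i : Fin (n + 1), C (a i) * X ^ (e i))
    (k : ℕ)
    (hk : k = (Finset.univ.filter
      (fun i : Fin n => a i.castSucc * a i.succ < 0)).card)
    (P : ℕ)
    (hP : P = Multiset.card (p.roots.filter (fun x => 0 < x))) :
    P ≤ k ∧ Even (k - P) := by
  have hp0 : p ≠ 0 := hp ▸ Descartes.p_ne_zero he ha
  have hV : Descartes.V (Descartes.coeffList p) = k := by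
    rw [Descartes.V, hp, Descartes.F_coeffList_eq he ha, Descartes.chs_ofFn_eq, hk,
      Finset.card_filter]
  have hPle : P ≤ k := by
    rw [← hV]
    exact Descartes.card_le_V P p hp0 hP.symm
  refine ⟨hPle, ?_⟩
  have hkpar : k % 2 = (if a 0 * a (Fin.last n) < 0 then 1 else 0) % 2 := by
    have h1 : Descartes.chs (List.ofFn a) % 2
        = (if a 0 * a (Fin.last n) < 0 then 1 else 0) % 2 :=
      Descartes.chs_ofFn_parity n a ha
    rw [← hV, Descartes.V, hp, Descartes.F_coeffList_eq he ha]
    exact h1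
  have htl : p.trailingCoeff * p.leadingCoeff = a 0 * a (Fin.last n) := by
    rw [hp, Descartes.trailingCoeff_eq he ha, Descartes.leadingCoeff_eq he ha]
  have hPpar := Descartes.odd_posroots_iff hp0
  rw [htl, ← hP] at hPpar
  have h1 : k % 2 = P % 2 := by
    rcases lt_or_ge (a 0 * a (Fin.last n)) 0 with h | h
    · rw [if_pos h] at hkpar
      have h2 : P % 2 = 1 := hPpar.2 h
      omega
    · rw [if_neg (not_lt.2 h)] at hkpar
      have h2 : ¬ P % 2 = 1 := fun hc => absurd (hPpar.1 hc) (not_lt.2 h)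
      omega
  rw [Nat.even_sub hPle, Nat.even_iff, Nat.even_iff]
  omega
end

section
/- Let α₀ < α₁ < … < αₙ be real numbers and a₀, a₁, …, aₙ be nonzero real numbers, and let k be the number of indices i with aᵢ·aᵢ₊₁ < 0. Define Y(x) = a₀x^{α₀} + a₁x^{α₁} + … + aₙx^{αₙ} for x > 0, where x^{αᵢ} denotes the real power function. Then the set {x ∈ ℝ : x > 0 and Y(x) = 0} has at most k elements. -/
open Set Finset

lemma between_encard {S T : Set ℝ}
    (h : ∀ x ∈ S, ∀ y ∈ S, x < y → ∃ z ∈ T, x < z ∧ z < y) :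
    S.encard ≤ T.encard + 1 := by
  by_contra hlt
  push_neg at hlt
  have hT : T.encard ≠ ⊤ := by
    intro h'
    rw [h'] at hlt
    simp at hlt
  obtain ⟨m, hm⟩ := WithTop.ne_top_iff_exists.mp hT
  have hTfin : T.Finite := Set.finite_of_encard_eq_coe hm.symm
  have hle : ((m + 2 : ℕ) : ℕ∞) ≤ S.encard := by
    have : T.encard + 1 < S.encard := hlt
    rw [← hm] at this
    have h2 : ((m : ℕ∞) + 1) + 1 ≤ S.encard := Order.add_one_le_of_lt this
    exact_mod_cast h2
  obtain ⟨t, htS, htc⟩ := Set.exists_subset_encard_eq hle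
  have htf : t.Finite := Set.finite_of_encard_eq_coe htc
  have hcard : htf.toFinset.card = m + 2 := by
    have := htf.encard_eq_coe_toFinset_card
    rw [htc] at this
    exact Nat.cast_injective this.symm
  set s := htf.toFinset with hs
  let e := s.orderIsoOfFin hcard
  have hmem : ∀ i : Fin (m + 2), (e i : ℝ) ∈ S := fun i => htS (htf.mem_toFinset.mp (e i).2)
  have hlt' : ∀ i : Fin (m + 1), (e i.castSucc : ℝ) < (e i.succ : ℝ) := fun i => by
    exact_mod_cast e.strictMono (Fin.castSucc_lt_succ : i.castSucc < i.succ)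
  choose z hzT hz1 hz2 using fun i : Fin (m + 1) =>
    h _ (hmem i.castSucc) _ (hmem i.succ) (hlt' i)
  have hzmono : StrictMono z := by
    intro i j hij
    calc z i < (e i.succ : ℝ) := hz2 i
      _ ≤ (e j.castSucc : ℝ) := by
          exact_mod_cast e.monotone (by
            rw [Fin.succ_le_castSucc_iff]; exact hij)
      _ < z j := hz1 j
  have hsub : Finset.univ.image z ⊆ hTfin.toFinset := by
    intro x hx
    simp only [Finset.mem_image] at hx
    obtain ⟨i, _, rfl⟩ := hx
    exact hTfin.mem_toFinset.mpr (hzT i)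
  have h1 : (Finset.univ.image z).card = m + 1 := by
    rw [Finset.card_image_of_injective _ hzmono.injective, Finset.card_univ, Fintype.card_fin]
  have h2 : hTfin.toFinset.card = m := by
    have := hTfin.encard_eq_coe_toFinset_card
    rw [← hm] at this
    exact Nat.cast_injective this.symm
  have := Finset.card_le_card hsub
  omega

lemma no_sign_change_no_zero
    (n : ℕ) (α : Fin (n + 1) → ℝ)
    (a : Fin (n + 1) → ℝ) (ha : ∀ i, a i ≠ 0)
    (h0 : ∀ i : Fin n, ¬ (a i.castSucc * a i.succ < 0))
    {x : ℝ} (hx : 0 < x) :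
    ∑ i : Fin (n + 1), a i * x ^ (α i) ≠ 0 := by
  have hpos : ∀ i : Fin n, 0 < a i.castSucc * a i.succ := fun i =>
    lt_of_le_of_ne (not_lt.mp (h0 i)) (Ne.symm (mul_ne_zero (ha _) (ha _)))
  have key : ∀ i : Fin (n + 1), 0 < a 0 * a i := by
    intro i
    induction i using Fin.induction with
    | zero => exact mul_pos_iff.mpr (by rcases (ha 0).lt_or_gt with h | h
                                        · right; exact ⟨h, h⟩
                                        · left; exact ⟨h, h⟩)
    | succ j ih =>
        have h1 := hpos j
        nlinarith [sq_nonneg (a j.castSucc), (ha j.castSucc)]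
  rcases (ha 0).lt_or_gt with h | h
  · -- a 0 < 0, all a i < 0
    have hneg : ∀ i : Fin (n + 1), a i < 0 := by
      intro i
      nlinarith [key i]
    have : ∑ i : Fin (n + 1), a i * x ^ (α i) < 0 := by
      apply Finset.sum_neg (fun i _ => ?_) Finset.univ_nonempty
      exact mul_neg_of_neg_of_pos (hneg i) (Real.rpow_pos_of_pos hx _)
    linarith
  · have hposa : ∀ i : Fin (n + 1), 0 < a i := by
      intro i
      nlinarith [key i]
    have : 0 < ∑ i : Fin (n + 1), a i * x ^ (α i) := by
      apply Finset.sum_pos (fun i _ => ?_) Finset.univ_nonempty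
      exact mul_pos (hposa i) (Real.rpow_pos_of_pos hx _)
    linarith

lemma descartes_aux :
    ∀ (k n : ℕ) (α : Fin (n + 1) → ℝ), StrictMono α →
    ∀ (a : Fin (n + 1) → ℝ), (∀ i, a i ≠ 0) →
    k = (Finset.univ.filter (fun i : Fin n => a i.castSucc * a i.succ < 0)).card →
    {x : ℝ | 0 < x ∧ ∑ i : Fin (n + 1), a i * x ^ (α i) = 0}.encard ≤ (k : ℕ∞) := by
  intro k
  induction k with
  | zero =>
    intro n α hα a ha hk
    have h0 : ∀ i : Fin n, ¬ (a i.castSucc * a i.succ < 0) := by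
      intro i hi
      have : i ∈ Finset.univ.filter (fun i : Fin n => a i.castSucc * a i.succ < 0) := by
        simp [hi]
      rw [Finset.card_eq_zero.mp hk.symm] at this
      simp at this
    have : {x : ℝ | 0 < x ∧ ∑ i : Fin (n + 1), a i * x ^ (α i) = 0} = ∅ := by
      ext x
      simp only [Set.mem_setOf_eq, Set.mem_empty_iff_false, iff_false, not_and]
      intro hx
      exact fun h => no_sign_change_no_zero n α a ha h0 hx h
    rw [this]
    simp
  | succ k IH =>
    intro n α hα a ha hk
    obtain ⟨j, hj⟩ : ∃ j, j ∈ Finset.univ.filter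
        (fun i : Fin n => a i.castSucc * a i.succ < 0) := by
      apply Finset.card_pos.mp
      omega
    have hja : a j.castSucc * a j.succ < 0 := (Finset.mem_filter.mp hj).2
    set β := (α j.castSucc + α j.succ) / 2 with hβ
    have hαj : α j.castSucc < α j.succ := hα (Fin.castSucc_lt_succ : j.castSucc < j.succ)
    have hβ1 : α j.castSucc < β := by rw [hβ]; linarith
    have hβ2 : β < α j.succ := by rw [hβ]; linarith
    -- dichotomy
    have hdich : ∀ i : Fin (n + 1), α i < β ∨ β < α i := by
      intro i
      rcases le_or_gt i j.castSucc with h | h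
      · left; exact lt_of_le_of_lt (hα.monotone h) hβ1
      · right
        have : j.succ ≤ i := by
          rw [Fin.le_def]; rw [Fin.lt_def] at h
          simp only [Fin.coe_castSucc] at h
          simp only [Fin.val_succ]
          omega
        exact lt_of_lt_of_le hβ2 (hα.monotone this)
    set b : Fin (n + 1) → ℝ := fun i => a i * (α i - β) with hbdef
    set γ : Fin (n + 1) → ℝ := fun i => α i - β - 1 with hγdef
    have hγ : StrictMono γ := fun i i' h => by
      simp only [hγdef]; have := hα h; linarith
    have hb : ∀ i, b i ≠ 0 := by
      intro i
      apply mul_ne_zero (ha i)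
      rcases hdich i with h | h <;> intro h' <;> rw [sub_eq_zero] at h' <;> linarith
    -- sign variations of b
    have hbfilter : Finset.univ.filter (fun i : Fin n => b i.castSucc * b i.succ < 0)
        = (Finset.univ.filter (fun i : Fin n => a i.castSucc * a i.succ < 0)).erase j := by
      ext i
      simp only [Finset.mem_filter, Finset.mem_erase, Finset.mem_univ, true_and]
      rcases eq_or_ne i j with rfl | hij
      · have hfac : (α i.castSucc - β) * (α i.succ - β) < 0 := by
          apply mul_neg_of_neg_of_pos <;> linarith
        constructor
        · intro h; exfalso
          simp only [hbdef] at h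
          nlinarith
        · rintro ⟨h, -⟩; exact absurd rfl h
      · have hfac : 0 < (α i.castSucc - β) * (α i.succ - β) := by
          rcases lt_or_gt_of_ne (fun h : i = j => hij h) with h | h
          · -- i < j : both < β
            have h1 : (i.succ : Fin (n+1)) ≤ j.castSucc := by
              rw [Fin.le_def]
              simp only [Fin.val_succ, Fin.coe_castSucc]
              rw [Fin.lt_def] at h
              omega
            have h2 : α i.succ ≤ α j.castSucc := hα.monotone h1
            have h3 : α i.castSucc < α i.succ := hα (Fin.castSucc_lt_succ : i.castSucc < i.succ)
            apply mul_pos_of_neg_of_neg <;> linarith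
          · -- j < i : both > β
            have h1 : (j.succ : Fin (n+1)) ≤ i.castSucc := by
              have hv : (j : ℕ) < (i : ℕ) := h
              rw [Fin.le_def]
              simp only [Fin.val_succ, Fin.coe_castSucc]
              omega
            have h2 : α j.succ ≤ α i.castSucc := hα.monotone h1
            have h3 : α i.castSucc < α i.succ := hα (Fin.castSucc_lt_succ : i.castSucc < i.succ)
            apply mul_pos <;> linarith
        simp only [hbdef]
        constructor
        · intro h
          refine ⟨hij, ?_⟩
          nlinarith
        · rintro ⟨-, h⟩
          nlinarith
    have hbcard : k = (Finset.univ.filter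
        (fun i : Fin n => b i.castSucc * b i.succ < 0)).card := by
      rw [hbfilter, Finset.card_erase_of_mem hj, ← hk]
      omega
    have hT := IH n γ hγ b hb hbcard
    -- between: zeros of Y interleave with zeros of the derivative system
    set T := {x : ℝ | 0 < x ∧ ∑ i : Fin (n + 1), b i * x ^ (γ i) = 0} with hTdef
    have hbetween : ∀ x ∈ {x : ℝ | 0 < x ∧ ∑ i : Fin (n + 1), a i * x ^ (α i) = 0},
        ∀ y ∈ {x : ℝ | 0 < x ∧ ∑ i : Fin (n + 1), a i * x ^ (α i) = 0},
        x < y → ∃ z ∈ T, x < z ∧ z < y := by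
      rintro x ⟨hx0, hxz⟩ y ⟨hy0, hyz⟩ hxy
      set g : ℝ → ℝ := fun t => ∑ i : Fin (n + 1), a i * t ^ (α i - β) with hg
      have hgval : ∀ t : ℝ, 0 < t →
          g t = (∑ i : Fin (n + 1), a i * t ^ (α i)) / t ^ β := by
        intro t ht
        rw [hg, Finset.sum_div]
        refine Finset.sum_congr rfl fun i _ => ?_
        rw [Real.rpow_sub ht]
        ring
      have hgx : g x = 0 := by rw [hgval x hx0, hxz]; simp
      have hgy : g y = 0 := by rw [hgval y hy0, hyz]; simp
      have hderiv : ∀ t : ℝ, 0 < t →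
          HasDerivAt g (∑ i : Fin (n + 1), b i * t ^ (γ i)) t := by
        intro t ht
        have : ∀ i ∈ (Finset.univ : Finset (Fin (n + 1))),
            HasDerivAt (fun s : ℝ => a i * s ^ (α i - β))
              (b i * t ^ (γ i)) t := by
          intro i _
          have h1 := Real.hasDerivAt_rpow_const (x := t) (p := α i - β) (Or.inl ht.ne')
          have h2 := h1.const_mul (a i)
          rw [show b i * t ^ γ i = a i * ((α i - β) * t ^ (α i - β - 1)) by
            simp only [hbdef, hγdef]
            ring]
          exact h2
        exact HasDerivAt.fun_sum this
      have hcont : ContinuousOn g (Set.Icc x y) := by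
        intro t ht
        exact (hderiv t (lt_of_lt_of_le hx0 ht.1)).continuousAt.continuousWithinAt
      obtain ⟨z, hzmem, hz0⟩ := exists_hasDerivAt_eq_zero hxy hcont (hgx.trans hgy.symm)
        (fun t ht => hderiv t (lt_trans hx0 ht.1))
      exact ⟨z, ⟨lt_trans hx0 hzmem.1, hz0⟩, hzmem.1, hzmem.2⟩
    have hfinal := between_encard hbetween
    calc {x : ℝ | 0 < x ∧ ∑ i : Fin (n + 1), a i * x ^ (α i) = 0}.encard
        ≤ T.encard + 1 := hfinal
      _ ≤ (k : ℕ∞) + 1 := by exact add_le_add_left hT 1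
      _ = ((k + 1 : ℕ) : ℕ∞) := by push_cast; ring

/-- Laguerre's extension of Descartes' rule of signs to real exponents:
a function `Y x = ∑ i, a i * x ^ (α i)` (real powers, `α` strictly increasing,
all `a i` nonzero) has at most `k` positive zeros, where `k` is the number of
sign variations of the coefficient sequence. -/
theorem descartes_rule_real_exponents
    (n : ℕ) (α : Fin (n + 1) → ℝ) (hα : StrictMono α)
    (a : Fin (n + 1) → ℝ) (ha : ∀ i, a i ≠ 0)
    (k : ℕ)
    (hk : k = (Finset.univ.filter
      (fun i : Fin n => a i.castSucc * a i.succ < 0)).card) :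
    {x : ℝ | 0 < x ∧ ∑ i : Fin (n + 1), a i * x ^ (α i) = 0}.encard ≤ (k : ℕ∞) := by
  exact descartes_aux k n α hα a ha hk
end

section
/- Let α < β < γ be real numbers and a > 0, c > 0, b < 0 be real numbers. Then a·x^α + b·x^β + c·x^γ > 0 for all x > 0 if and only if (a/(γ−β))^{γ−β} · (b/(α−γ))^{α−γ} · (c/(β−α))^{β−α} > 1, where all powers are real powers of the positive bases a/(γ−β), b/(α−γ), c/(β−α). -/
private lemma eq_of_log_eq {x y : ℝ} (hx : 0 < x) (hy : 0 < y)
    (h : Real.log x = Real.log y) : x = y := by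
  rw [← Real.exp_log hx, ← Real.exp_log hy, h]

/-- Proposition 2: positivity criterion for trinomials. For `α < β < γ`,
`a > 0`, `c > 0`, `b < 0`, the trinomial `a x^α + b x^β + c x^γ` is positive on
`(0, ∞)` iff `(a/(γ-β))^(γ-β) * (b/(α-γ))^(α-γ) * (c/(β-α))^(β-α) > 1`. -/
theorem trinomial_positive_iff
    (α β γ a b c : ℝ)
    (hαβ : α < β) (hβγ : β < γ)
    (ha : 0 < a) (hc : 0 < c) (hb : b < 0) :
    (∀ x : ℝ, 0 < x → 0 < a * x ^ α + b * x ^ β + c * x ^ γ) ↔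
      1 < (a / (γ - β)) ^ (γ - β) * (b / (α - γ)) ^ (α - γ) *
        (c / (β - α)) ^ (β - α) := by
  have hp : 0 < β - α := by linarith
  have hq : 0 < γ - β := by linarith
  set p := β - α with hpdef
  set q := γ - β with hqdef
  have hs : 0 < p + q := by positivity
  have hb' : 0 < -b := by linarith
  set K : ℝ := -b / (p + q) with hKdef
  have hK : 0 < K := div_pos hb' hs
  have haq : 0 < a / q := div_pos ha hq
  have hcp : 0 < c / p := div_pos hc hp
  have hX : 0 < (a / q) ^ q * (c / p) ^ p :=
    mul_pos (Real.rpow_pos_of_pos haq q) (Real.rpow_pos_of_pos hcp p)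
  set G : ℝ := ((a / q) ^ q * (c / p) ^ p) ^ (1 / (p + q)) with hGdef
  have hG : 0 < G := Real.rpow_pos_of_pos hX _
  have hlogG : Real.log G
      = (q * Real.log (a / q) + p * Real.log (c / p)) / (p + q) := by
    rw [hGdef, Real.log_rpow hX, Real.log_mul (by positivity) (by positivity),
      Real.log_rpow haq, Real.log_rpow hcp]
    ring
  have hGs : G ^ (p + q) = (a / q) ^ q * (c / p) ^ p := by
    rw [hGdef, ← Real.rpow_mul hX.le, one_div_mul_cancel hs.ne', Real.rpow_one]
  -- AM–GM lower bound for the rescaled trinomial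
  have key : ∀ x : ℝ, 0 < x → (p + q) * G ≤ a * x ^ (-p) + c * x ^ q := by
    intro x hx
    have hu : 0 < a * x ^ (-p) := mul_pos ha (Real.rpow_pos_of_pos hx _)
    have hv : 0 < c * x ^ q := mul_pos hc (Real.rpow_pos_of_pos hx _)
    have hwsum : q / (p + q) + p / (p + q) = 1 := by field_simp; ring
    have amgm := Real.geom_mean_le_arith_mean2_weighted
      (by positivity) (by positivity)
      (le_of_lt (show (0:ℝ) < a * x ^ (-p) / (q / (p + q)) by positivity))
      (le_of_lt (show (0:ℝ) < c * x ^ q / (p / (p + q)) by positivity)) hwsum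
    have heq : (a * x ^ (-p) / (q / (p + q))) ^ (q / (p + q))
        * (c * x ^ q / (p / (p + q))) ^ (p / (p + q)) = (p + q) * G := by
      apply eq_of_log_eq (by positivity) (by positivity)
      rw [Real.log_mul (by positivity) (by positivity),
        Real.log_rpow (by positivity), Real.log_rpow (by positivity),
        Real.log_mul hs.ne' hG.ne', hlogG,
        Real.log_div hu.ne' (by positivity), Real.log_div hv.ne' (by positivity),
        Real.log_mul ha.ne' (by positivity), Real.log_mul hc.ne' (by positivity),
        Real.log_rpow hx, Real.log_rpow hx,
        Real.log_div hq.ne' hs.ne', Real.log_div hp.ne' hs.ne',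
        Real.log_div ha.ne' hq.ne', Real.log_div hc.ne' hp.ne']
      field_simp
      ring
    have hsum : q / (p + q) * (a * x ^ (-p) / (q / (p + q)))
        + p / (p + q) * (c * x ^ q / (p / (p + q)))
        = a * x ^ (-p) + c * x ^ q := by
      field_simp
    rw [heq, hsum] at amgm
    exact amgm
  -- the minimizer
  have hT : 0 < p * a / (q * c) := by positivity
  set x₀ : ℝ := (p * a / (q * c)) ^ (1 / (p + q)) with hx₀def
  have hx₀ : 0 < x₀ := Real.rpow_pos_of_pos hT _
  have hlogx₀ : Real.log x₀
      = (Real.log p + Real.log a - (Real.log q + Real.log c)) / (p + q) := by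
    rw [hx₀def, Real.log_rpow hT, Real.log_div (by positivity) (by positivity),
      Real.log_mul hp.ne' ha.ne', Real.log_mul hq.ne' hc.ne']
    ring
  have hval1 : a * x₀ ^ (-p) = q * G := by
    apply eq_of_log_eq (by positivity) (by positivity)
    rw [Real.log_mul ha.ne' (by positivity), Real.log_rpow hx₀, hlogx₀,
      Real.log_mul hq.ne' hG.ne', hlogG,
      Real.log_div ha.ne' hq.ne', Real.log_div hc.ne' hp.ne']
    field_simp
    ring
  have hval2 : c * x₀ ^ q = p * G := by
    apply eq_of_log_eq (by positivity) (by positivity)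
    rw [Real.log_mul hc.ne' (by positivity), Real.log_rpow hx₀, hlogx₀,
      Real.log_mul hp.ne' hG.ne', hlogG,
      Real.log_div ha.ne' hq.ne', Real.log_div hc.ne' hp.ne']
    field_simp
    ring
  -- factor out x^β
  have hdecomp : ∀ x : ℝ, 0 < x →
      a * x ^ α + b * x ^ β + c * x ^ γ
        = x ^ β * (a * x ^ (-p) + b + c * x ^ q) := by
    intro x hx
    have h1 : x ^ β * x ^ (-p) = x ^ α := by
      rw [← Real.rpow_add hx]; congr 1; rw [hpdef]; ring
    have h2 : x ^ β * x ^ q = x ^ γ := by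
      rw [← Real.rpow_add hx]; congr 1; rw [hqdef]; ring
    rw [show x ^ β * (a * x ^ (-p) + b + c * x ^ q)
        = a * (x ^ β * x ^ (-p)) + b * x ^ β + c * (x ^ β * x ^ q) by ring,
      h1, h2]
  -- rewrite the criterion
  have hαγ : α - γ = -(p + q) := by rw [hpdef, hqdef]; ring
  have hKb : b / (α - γ) = K := by
    rw [hαγ, hKdef, div_neg, ← neg_div]
  have hcrit : (a / q) ^ q * (b / (α - γ)) ^ (α - γ) * (c / p) ^ p
      = G ^ (p + q) / K ^ (p + q) := by
    rw [hKb, hαγ, Real.rpow_neg hK.le, hGs]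
    ring
  rw [hcrit, one_lt_div (Real.rpow_pos_of_pos hK _),
    Real.rpow_lt_rpow_iff hK.le hG.le hs]
  constructor
  · intro h
    have h0 := h x₀ hx₀
    rw [hdecomp x₀ hx₀] at h0
    have h1 : 0 < a * x₀ ^ (-p) + b + c * x₀ ^ q := by
      by_contra hcon
      push_neg at hcon
      nlinarith [Real.rpow_pos_of_pos hx₀ β]
    rw [hval1, hval2] at h1
    rw [hKdef, div_lt_iff₀ hs]
    nlinarith
  · intro hKG x hx
    rw [hdecomp x hx]
    have h2 := key x hx
    have h3 : (p + q) * K = -b := by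
      rw [hKdef]; field_simp
    have h5 : (p + q) * K < (p + q) * G := mul_lt_mul_of_pos_left hKG hs
    rw [h3] at h5
    have h4 : 0 < a * x ^ (-p) + b + c * x ^ q := by linarith
    exact mul_pos (Real.rpow_pos_of_pos hx β) h4
end

section
/- Let α < β < γ be real numbers and a > 0, c > 0, b < 0 be real numbers, and set A = a/(γ−β), B = b/(α−γ), C = c/(β−α) (all positive). Let Y(x) = a·x^α + b·x^β + c·x^γ for x > 0. Then there exists x₁ > 0 with Y(x₁) = 0 and Y′(x₁) = 0 if and only if A^{γ−β} · B^{α−γ} · C^{β−α} = 1. -/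
/-- Double-root criterion for trinomials. For `α < β < γ`, `a > 0`, `c > 0`,
`b < 0`, with `A = a/(γ-β)`, `B = b/(α-γ)`, `C = c/(β-α)`, the trinomial
`Y x = a x^α + b x^β + c x^γ` has a positive double root iff
`A^(γ-β) * B^(α-γ) * C^(β-α) = 1`. -/
theorem trinomial_double_root_iff
    (α β γ a b c : ℝ)
    (hαβ : α < β) (hβγ : β < γ)
    (ha : 0 < a) (hc : 0 < c) (hb : b < 0)
    (A B C : ℝ)
    (hA : A = a / (γ - β)) (hB : B = b / (α - γ)) (hC : C = c / (β - α))
    (Y : ℝ → ℝ) (hY : Y = fun x : ℝ => a * x ^ α + b * x ^ β + c * x ^ γ) :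
    (∃ x₁ : ℝ, 0 < x₁ ∧ Y x₁ = 0 ∧ deriv Y x₁ = 0) ↔
      A ^ (γ - β) * B ^ (α - γ) * C ^ (β - α) = 1 := by
  subst hY
  have hγβ : (0:ℝ) < γ - β := by linarith
  have hβα : (0:ℝ) < β - α := by linarith
  have hαγ : α - γ < 0 := by linarith
  have hA0 : 0 < A := by rw [hA]; exact div_pos ha hγβ
  have hB0 : 0 < B := by rw [hB]; exact div_pos_of_neg_of_neg hb hαγ
  have hC0 : 0 < C := by rw [hC]; exact div_pos hc hβα
  set P := Real.log A with hP
  set Q := Real.log B with hQ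
  set R := Real.log C with hR
  constructor
  · rintro ⟨x, hx, hY0, hY'⟩
    have hxne : x ≠ 0 := hx.ne'
    have h1 := (Real.hasDerivAt_rpow_const (p := α) (Or.inl hxne)).const_mul a
    have h2 := (Real.hasDerivAt_rpow_const (p := β) (Or.inl hxne)).const_mul b
    have h3 := (Real.hasDerivAt_rpow_const (p := γ) (Or.inl hxne)).const_mul c
    have hd : HasDerivAt (fun y => a * y ^ α + b * y ^ β + c * y ^ γ) _ x := (h1.add h2).add h3
    have hsub : ∀ p : ℝ, x ^ (p - 1) = x ^ p / x := fun p => by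
      rw [Real.rpow_sub hx, Real.rpow_one]
    rw [hd.deriv, hsub α, hsub β, hsub γ] at hY'
    have hr : a * (α * (x ^ α / x)) + b * (β * (x ^ β / x)) + c * (γ * (x ^ γ / x))
        = (α * (a * x ^ α) + β * (b * x ^ β) + γ * (c * x ^ γ)) / x := by ring
    rw [hr] at hY'
    have hE2 : α * (a * x ^ α) + β * (b * x ^ β) + γ * (c * x ^ γ) = 0 :=
      (div_eq_zero_iff.mp hY').resolve_right hxne
    have hE1 : a * x ^ α + b * x ^ β + c * x ^ γ = 0 := by simpa using hY0
    have hu' : (α - γ) * (a * x ^ α) = (γ - β) * (b * x ^ β) := by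
      linear_combination hE2 - γ * hE1
    have hw' : (α - γ) * (c * x ^ γ) = (β - α) * (b * x ^ β) := by
      linear_combination α * hE1 - hE2
    have hmain1 : A * x ^ α = B * x ^ β := by
      rw [hA, hB, div_mul_eq_mul_div, div_mul_eq_mul_div,
        div_eq_div_iff hγβ.ne' (by linarith : α - γ ≠ 0)]
      linear_combination hu'
    have hmain2 : B * x ^ β = C * x ^ γ := by
      rw [hB, hC, div_mul_eq_mul_div, div_mul_eq_mul_div,
        div_eq_div_iff (by linarith : α - γ ≠ 0) hβα.ne']
      linear_combination -hw'
    have hxα : (0:ℝ) < x ^ α := Real.rpow_pos_of_pos hx α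
    have hxβ : (0:ℝ) < x ^ β := Real.rpow_pos_of_pos hx β
    have hxγ : (0:ℝ) < x ^ γ := Real.rpow_pos_of_pos hx γ
    have hl1 : P + α * Real.log x = Q + β * Real.log x := by
      have h := congrArg Real.log hmain1
      rwa [Real.log_mul hA0.ne' hxα.ne', Real.log_mul hB0.ne' hxβ.ne',
        Real.log_rpow hx, Real.log_rpow hx] at h
    have hl2 : Q + β * Real.log x = R + γ * Real.log x := by
      have h := congrArg Real.log hmain2
      rwa [Real.log_mul hB0.ne' hxβ.ne', Real.log_mul hC0.ne' hxγ.ne',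
        Real.log_rpow hx, Real.log_rpow hx] at h
    rw [Real.rpow_def_of_pos hA0, Real.rpow_def_of_pos hB0, Real.rpow_def_of_pos hC0,
      ← Real.exp_add, ← Real.exp_add]
    have hz : P * (γ - β) + Q * (α - γ) + R * (β - α) = 0 := by
      linear_combination (γ - β) * hl1 + (α - β) * hl2
    rw [← hP, ← hQ, ← hR, hz, Real.exp_zero]
  · intro h
    have hcond : (γ - β) * P + (α - γ) * Q + (β - α) * R = 0 := by
      have hh := congrArg Real.log h
      rw [Real.log_mul (by positivity) (by positivity),
        Real.log_mul (by positivity) (by positivity),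
        Real.log_rpow hA0, Real.log_rpow hB0, Real.log_rpow hC0, Real.log_one] at hh
      linarith
    set L := (P - Q) / (β - α) with hL
    set x := Real.exp L with hxdef
    have hx : 0 < x := Real.exp_pos L
    have hs1 : P + α * L = Q + β * L := by
      rw [hL]; field_simp; ring
    have hs2 : Q + β * L = R + γ * L := by
      rw [hL]; field_simp
      linear_combination -hcond
    have hxp : ∀ p : ℝ, x ^ p = Real.exp (p * L) := fun p => by
      rw [Real.rpow_def_of_pos hx, Real.log_exp, mul_comm]
    have ha' : a = (γ - β) * A := by rw [hA]; field_simp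
    have hb' : b = (α - γ) * B := by rw [hB]; field_simp [show α - γ ≠ 0 by linarith]
    have hc' : c = (β - α) * C := by rw [hC]; field_simp
    have hAe : A = Real.exp P := (Real.exp_log hA0).symm
    have hBe : B = Real.exp Q := (Real.exp_log hB0).symm
    have hCe : C = Real.exp R := (Real.exp_log hC0).symm
    have hu : a * x ^ α = (γ - β) * Real.exp (P + α * L) := by
      rw [hxp α, Real.exp_add, ha', hAe]; ring
    have hv : b * x ^ β = (α - γ) * Real.exp (Q + β * L) := by
      rw [hxp β, Real.exp_add, hb', hBe]; ring
    have hw : c * x ^ γ = (β - α) * Real.exp (R + γ * L) := by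
      rw [hxp γ, Real.exp_add, hc', hCe]; ring
    have hE1 : a * x ^ α + b * x ^ β + c * x ^ γ = 0 := by
      rw [hu, hv, hw, ← hs1, ← hs2, ← hs1]; ring
    have hnum : α * (a * x ^ α) + β * (b * x ^ β) + γ * (c * x ^ γ) = 0 := by
      rw [hu, hv, hw, ← hs1, ← hs2, ← hs1]; ring
    have hxne : x ≠ 0 := hx.ne'
    have h1 := (Real.hasDerivAt_rpow_const (p := α) (Or.inl hxne)).const_mul a
    have h2 := (Real.hasDerivAt_rpow_const (p := β) (Or.inl hxne)).const_mul b
    have h3 := (Real.hasDerivAt_rpow_const (p := γ) (Or.inl hxne)).const_mul c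
    have hd : HasDerivAt (fun y => a * y ^ α + b * y ^ β + c * y ^ γ) _ x := (h1.add h2).add h3
    have hsub : ∀ p : ℝ, x ^ (p - 1) = x ^ p / x := fun p => by
      rw [Real.rpow_sub hx, Real.rpow_one]
    refine ⟨x, hx, by simpa using hE1, ?_⟩
    rw [hd.deriv, hsub α, hsub β, hsub γ]
    have hr : a * (α * (x ^ α / x)) + b * (β * (x ^ β / x)) + c * (γ * (x ^ γ / x))
        = (α * (a * x ^ α) + β * (b * x ^ β) + γ * (c * x ^ γ)) / x := by ring
    rw [hr, hnum, zero_div]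
end

section
/- Let α < β < γ be real numbers and a > 0, c > 0, b < 0 be real numbers with A = a/(γ−β), B = b/(α−γ), C = c/(β−α), and suppose A^{γ−β} · B^{α−γ} · C^{β−α} = 1. Then the point x₁ = (C/B)^{1/(β−γ)} satisfies x₁ = (A/C)^{1/(γ−α)} = (B/A)^{1/(α−β)}, and Y(x₁) = 0 and Y′(x₁) = 0, where Y(x) = a·x^α + b·x^β + c·x^γ. -/
/-- Location of the double root of a trinomial. For `α < β < γ`, `a > 0`,
`c > 0`, `b < 0`, with `A = a/(γ-β)`, `B = b/(α-γ)`, `C = c/(β-α)` and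
`A^(γ-β) * B^(α-γ) * C^(β-α) = 1`, the point `x₁ = (C/B)^(1/(β-γ))` equals
`(A/C)^(1/(γ-α))` and `(B/A)^(1/(α-β))`, and is a double root of
`Y x = a x^α + b x^β + c x^γ`. -/
theorem trinomial_double_root_location
    (α β γ a b c : ℝ)
    (hαβ : α < β) (hβγ : β < γ)
    (ha : 0 < a) (hc : 0 < c) (hb : b < 0)
    (A B C : ℝ)
    (hA : A = a / (γ - β)) (hB : B = b / (α - γ)) (hC : C = c / (β - α))
    (hcrit : A ^ (γ - β) * B ^ (α - γ) * C ^ (β - α) = 1)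
    (Y : ℝ → ℝ) (hY : Y = fun x : ℝ => a * x ^ α + b * x ^ β + c * x ^ γ)
    (x₁ : ℝ) (hx₁ : x₁ = (C / B) ^ (1 / (β - γ))) :
    x₁ = (A / C) ^ (1 / (γ - α)) ∧ x₁ = (B / A) ^ (1 / (α - β)) ∧
      Y x₁ = 0 ∧ deriv Y x₁ = 0 := by
  have hp : (0:ℝ) < γ - β := by linarith
  have hq : α - γ < 0 := by linarith
  have hr : (0:ℝ) < β - α := by linarith
  have hA0 : 0 < A := by rw [hA]; exact div_pos ha hp
  have hB0 : 0 < B := by rw [hB]; exact div_pos_of_neg_of_neg hb hq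
  have hC0 : 0 < C := by rw [hC]; exact div_pos hc hr
  have ha' : a = A * (γ - β) := by
    rw [hA]; exact (div_mul_cancel₀ a (by linarith : γ - β ≠ 0)).symm
  have hb' : b = B * (α - γ) := by
    rw [hB]; exact (div_mul_cancel₀ b (by linarith : α - γ ≠ 0)).symm
  have hc' : c = C * (β - α) := by
    rw [hC]; exact (div_mul_cancel₀ c (by linarith : β - α ≠ 0)).symm
  have hβγ' : β - γ ≠ 0 := by linarith
  have hγα' : γ - α ≠ 0 := by linarith
  have hαβ' : α - β ≠ 0 := by linarith
  set lA := Real.log A with hlA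
  set lB := Real.log B with hlB
  set lC := Real.log C with hlC
  have hlog : (γ - β) * lA + (α - γ) * lB + (β - α) * lC = 0 := by
    have h := congrArg Real.log hcrit
    rw [Real.log_mul (by positivity) (by positivity),
        Real.log_mul (by positivity) (by positivity),
        Real.log_rpow hA0, Real.log_rpow hB0, Real.log_rpow hC0, Real.log_one] at h
    linarith
  have hx0 : 0 < x₁ := by
    rw [hx₁]; exact Real.rpow_pos_of_pos (div_pos hC0 hB0) _
  set t := Real.log x₁ with hT
  have ht : t = 1 / (β - γ) * (lC - lB) := by
    rw [hT, hx₁, Real.log_rpow (div_pos hC0 hB0), Real.log_div hC0.ne' hB0.ne', ← hlC, ← hlB]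
  have ht' : t * (β - γ) = lC - lB := by
    rw [ht]; field_simp
  have htAC : t * (γ - α) = lA - lC := by
    have h2 : (β - γ) * (t * (γ - α)) = (β - γ) * (lA - lC) := by
      linear_combination (γ - α) * ht' + hlog
    exact mul_left_cancel₀ hβγ' h2
  have htBA : t * (α - β) = lB - lA := by
    have h2 : (β - γ) * (t * (α - β)) = (β - γ) * (lB - lA) := by
      linear_combination (α - β) * ht' - hlog
    exact mul_left_cancel₀ hβγ' h2
  have e2 : x₁ = (A / C) ^ (1 / (γ - α)) := by
    rw [Real.rpow_def_of_pos (div_pos hA0 hC0), Real.log_div hA0.ne' hC0.ne',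
        ← hlA, ← hlC, ← Real.exp_log hx0, ← hT]
    congr 1
    field_simp
    linear_combination htAC
  have e3 : x₁ = (B / A) ^ (1 / (α - β)) := by
    rw [Real.rpow_def_of_pos (div_pos hB0 hA0), Real.log_div hB0.ne' hA0.ne',
        ← hlB, ← hlA, ← Real.exp_log hx0, ← hT]
    congr 1
    field_simp
    linear_combination htBA
  have eAB : A * x₁ ^ α = B * x₁ ^ β := by
    rw [Real.rpow_def_of_pos hx0, Real.rpow_def_of_pos hx0, ← hT,
        ← Real.exp_log hA0, ← Real.exp_log hB0, ← hlA, ← hlB,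
        ← Real.exp_add, ← Real.exp_add]
    congr 1
    linear_combination htBA
  have eAC : A * x₁ ^ α = C * x₁ ^ γ := by
    rw [Real.rpow_def_of_pos hx0, Real.rpow_def_of_pos hx0, ← hT,
        ← Real.exp_log hA0, ← Real.exp_log hC0, ← hlA, ← hlC,
        ← Real.exp_add, ← Real.exp_add]
    congr 1
    linear_combination -htAC
  have hYx : Y x₁ = 0 := by
    rw [hY]
    simp only
    rw [ha', hb', hc']
    linear_combination (γ - α) * eAB + (α - β) * eAC
  have hd : HasDerivAt Y
      (a * (α * x₁ ^ (α - 1)) + b * (β * x₁ ^ (β - 1)) + c * (γ * x₁ ^ (γ - 1))) x₁ := by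
    rw [hY]
    exact (((Real.hasDerivAt_rpow_const (Or.inl hx0.ne')).const_mul a).add
      ((Real.hasDerivAt_rpow_const (Or.inl hx0.ne')).const_mul b)).add
      ((Real.hasDerivAt_rpow_const (Or.inl hx0.ne')).const_mul c)
  have hd0 : deriv Y x₁ = 0 := by
    rw [hd.deriv]
    rw [Real.rpow_sub hx0, Real.rpow_sub hx0, Real.rpow_sub hx0, Real.rpow_one,
        ha', hb', hc']
    linear_combination (β * (γ - α) / x₁) * eAB + (γ * (α - β) / x₁) * eAC
  exact ⟨e2, e3, hYx, hd0⟩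
end

section
/- Let p(x) = a₀ + a₁x + a₂x² + a₃x³ + a₄x⁴ be a real polynomial with a₀ > 0, a₁ < 0, a₂ < 0, a₃ < 0, a₄ > 0. If p(x) ≠ 0 for all x > 0, then p(x) ≠ 0 for all x < 0. (In other words, for such sign patterns, zero positive roots forces zero negative roots: the combination (P,N) = (0,2) is impossible.) -/
/-- Grabiner's observation: for a degree-4 polynomial with sign sequence
`+,-,-,-,+` (constant term first), if it has no positive roots then it has no
negative roots, i.e. `(P, N) = (0, 2)` is impossible. -/
theorem deg4_no_pos_roots_implies_no_neg_roots
    (a₀ a₁ a₂ a₃ a₄ : ℝ)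
    (h₀ : 0 < a₀) (h₁ : a₁ < 0) (h₂ : a₂ < 0) (h₃ : a₃ < 0) (h₄ : 0 < a₄)
    (hpos : ∀ x : ℝ, 0 < x →
      a₀ + a₁ * x + a₂ * x ^ 2 + a₃ * x ^ 3 + a₄ * x ^ 4 ≠ 0) :
    ∀ x : ℝ, x < 0 →
      a₀ + a₁ * x + a₂ * x ^ 2 + a₃ * x ^ 3 + a₄ * x ^ 4 ≠ 0 := by
  intro x hx hroot
  set f : ℝ → ℝ := fun t => a₀ + a₁ * t + a₂ * t ^ 2 + a₃ * t ^ 3 + a₄ * t ^ 4 with hf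
  have hy : 0 < -x := by linarith
  have hfy : f (-x) < 0 := by
    have h1 : a₁ * (-x) < 0 := mul_neg_of_neg_of_pos h₁ hy
    have h3 : a₃ * (-x) ^ 3 < 0 := mul_neg_of_neg_of_pos h₃ (by positivity)
    have : f (-x) = (a₀ + a₁ * x + a₂ * x ^ 2 + a₃ * x ^ 3 + a₄ * x ^ 4)
        + 2 * (a₁ * (-x)) + 2 * (a₃ * (-x) ^ 3) := by simp [hf]; ring
    rw [this, hroot]; linarith
  have hcont : ContinuousOn f (Set.Icc 0 (-x)) := by fun_prop
  have hiv := intermediate_value_Ioo (le_of_lt hy) hcont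
  have h0mem : (0 : ℝ) ∈ Set.Ioo (f (-x)) (f 0) := by
    constructor
    · exact hfy
    · simp [hf]; linarith
  have : (0:ℝ) ∈ f '' Set.Ioo 0 (-x) := by
    have hiv' := intermediate_value_Ioo' (le_of_lt hy) hcont
    exact hiv' h0mem
  obtain ⟨c, hc, hfc⟩ := this
  exact hpos c hc.1 hfc
end

section
/- There is no real polynomial p(x) = a₀ + a₁x + a₂x² + a₃x³ + a₄x⁴ + a₅x⁵ with a₀ > 0, a₁ > 0, a₂ < 0, a₃ > 0, a₄ < 0, a₅ < 0 such that p has exactly 3 positive real roots counted with multiplicity and no negative real roots. -/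
open Polynomial

lemma key_contra_e (e1 e2 e3 b0 b1 b2 : ℝ) (he1p : 0 < e1) (he2p : 0 < e2) (he3p : 0 < e3)
    (hnewton : 3 * (e1 * e3) ≤ e2 ^ 2) (ham : 9 * e3 ≤ e1 * e2)
    (hb2 : b2 < 0)
    (hdisc : b1 ^ 2 < 4 * b2 * b0)
    (hA : b1 - e1 * b2 < 0)
    (hB : 0 < b0 - e1 * b1 + e2 * b2)
    (hC : 0 < e2 * b0 - e3 * b1) : False := by
  have hb2ne : b2 ≠ 0 := ne_of_lt hb2
  set s := b0 / b2 with hs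
  set t := b1 / b2 with ht
  have hbs : b2 * s = b0 := by rw [hs]; field_simp
  have hbt : b2 * t = b1 := by rw [ht]; field_simp
  have hte : e1 < t := by
    have h : b2 * (t - e1) < 0 := by
      have he : b2 * (t - e1) = b1 - e1 * b2 := by rw [mul_sub, hbt]; ring
      rw [he]; exact hA
    rcases mul_neg_iff.mp h with ⟨h1, _⟩ | ⟨_, h2⟩
    · exact absurd h1 (not_lt.2 hb2.le)
    · linarith
  have hts : t ^ 2 < 4 * s := by
    have e1' : b2 ^ 2 * t ^ 2 = b1 ^ 2 := by rw [← hbt]; ring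
    have e2' : b2 ^ 2 * (4 * s) = 4 * b2 * b0 := by rw [← hbs]; ring
    have h : b2 ^ 2 * t ^ 2 < b2 ^ 2 * (4 * s) := by rw [e1', e2']; exact hdisc
    exact lt_of_mul_lt_mul_left h (sq_nonneg b2)
  have hsp : 0 < s := by nlinarith [sq_nonneg t]
  have hB' : s + e2 < t * e1 := by
    have h : 0 < b2 * (s + e2 - t * e1) := by
      have he : b2 * (s + e2 - t * e1) = b0 - e1 * b1 + e2 * b2 := by
        rw [mul_sub, mul_add, hbs, show b2 * (t * e1) = e1 * (b2 * t) by ring, hbt]; ring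
      rw [he]; exact hB
    rcases mul_pos_iff.mp h with ⟨h1, _⟩ | ⟨_, h2⟩
    · exact absurd h1 (not_lt.2 hb2.le)
    · linarith
  have hC' : s * e2 < t * e3 := by
    have h : 0 < b2 * (s * e2 - t * e3) := by
      have he : b2 * (s * e2 - t * e3) = e2 * b0 - e3 * b1 := by
        rw [mul_sub, show b2 * (s * e2) = e2 * (b2 * s) by ring, hbs,
          show b2 * (t * e3) = e3 * (b2 * t) by ring, hbt]
      rw [he]; exact hC
    rcases mul_pos_iff.mp h with ⟨h1, _⟩ | ⟨_, h2⟩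
    · exact absurd h1 (not_lt.2 hb2.le)
    · linarith
  have hp1 : (0:ℝ) ≤ s + e2 := by positivity
  have hp2 : (0:ℝ) ≤ s * e2 := by positivity
  have hstep1 : (s + e2) * (s * e2) < (t * e1) * (t * e3) := mul_lt_mul'' hB' hC' hp1 hp2
  have hstep2 : t ^ 2 * (e1 * e3) < 4 * s * (e1 * e3) :=
    mul_lt_mul_of_pos_right hts (mul_pos he1p he3p)
  have hkey : s * e2 < e1 * e3 := by
    have h1 : s * (s * e2) < s * (e1 * e3) := by
      nlinarith [hstep1, hstep2, mul_le_mul_of_nonneg_left hnewton hsp.le]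
    exact lt_of_mul_lt_mul_left h1 hsp.le
  have hse : e1 ^ 2 < 4 * s := by
    have h : e1 ^ 2 < t ^ 2 := by
      nlinarith [mul_pos (sub_pos.2 hte) (by linarith : (0:ℝ) < t + e1)]
    linarith
  nlinarith [mul_lt_mul_of_pos_right hse he2p, mul_le_mul_of_nonneg_left ham he1p.le,
    mul_pos he1p he3p, hkey]

lemma key_contra (r1 r2 r3 b0 b1 b2 : ℝ) (hr1 : 0 < r1) (hr2 : 0 < r2) (hr3 : 0 < r3)
    (hb2 : b2 < 0)
    (hdisc : b1 ^ 2 < 4 * b2 * b0)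
    (hA : b1 - (r1 + r2 + r3) * b2 < 0)
    (hB : 0 < b0 - (r1 + r2 + r3) * b1 + (r1 * r2 + r1 * r3 + r2 * r3) * b2)
    (hC : 0 < (r1 * r2 + r1 * r3 + r2 * r3) * b0 - r1 * r2 * r3 * b1) : False := by
  apply key_contra_e (r1 + r2 + r3) (r1 * r2 + r1 * r3 + r2 * r3) (r1 * r2 * r3) b0 b1 b2
    (by positivity) (by positivity) (by positivity) ?_ ?_ hb2 hdisc hA hB hC
  · nlinarith [sq_nonneg (r1*r2 - r1*r3), sq_nonneg (r1*r2 - r2*r3), sq_nonneg (r1*r3 - r2*r3),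
      mul_pos hr1 hr2, mul_pos hr2 hr3]
  · nlinarith [mul_nonneg hr1.le (sq_nonneg (r2 - r3)), mul_nonneg hr2.le (sq_nonneg (r1 - r3)),
      mul_nonneg hr3.le (sq_nonneg (r1 - r2))]

/-- Impossibility for degree 5: no polynomial with sign sequence `+,+,-,+,-,-`
(constant term first) has exactly 3 positive roots (with multiplicity) and no
negative roots. -/
theorem deg5_sign_sequence_impossibility :
    ¬ ∃ (a₀ a₁ a₂ a₃ a₄ a₅ : ℝ) (p : Polynomial ℝ),
      0 < a₀ ∧ 0 < a₁ ∧ a₂ < 0 ∧ 0 < a₃ ∧ a₄ < 0 ∧ a₅ < 0 ∧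
      p = C a₀ + C a₁ * X + C a₂ * X ^ 2 + C a₃ * X ^ 3 + C a₄ * X ^ 4
        + C a₅ * X ^ 5 ∧
      Multiset.card (p.roots.filter (fun x => 0 < x)) = 3 ∧
      (∀ x : ℝ, x < 0 → p.eval x ≠ 0) := by
  rintro ⟨a0, a1, a2, a3, a4, a5, p, h0, h1, h2, h3, h4, h5, hp, hcard, hneg⟩
  have ha5 : a5 ≠ 0 := ne_of_lt h5
  have hdeg : p.natDegree = 5 := by rw [hp]; compute_degree!
  have hp0 : p ≠ 0 := fun h => by simp [h] at hdeg
  have heval0 : p.eval 0 = a0 := by simp [hp]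
  have hrootpos : ∀ x ∈ p.roots, 0 < x := by
    intro x hx
    have hx0 : p.eval x = 0 := (mem_roots hp0).1 hx
    rcases lt_trichotomy x 0 with h | h | h
    · exact absurd hx0 (hneg x h)
    · subst h; rw [heval0] at hx0; linarith
    · exact h
  have hfilter : p.roots.filter (fun x => 0 < x) = p.roots :=
    Multiset.filter_eq_self.2 hrootpos
  rw [hfilter] at hcard
  obtain ⟨r1, r2, r3, hroots⟩ := Multiset.card_eq_three.mp hcard
  have hr1 : 0 < r1 := hrootpos r1 (by rw [hroots]; simp)
  have hr2 : 0 < r2 := hrootpos r2 (by rw [hroots]; simp)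
  have hr3 : 0 < r3 := hrootpos r3 (by rw [hroots]; simp)
  obtain ⟨q, hq⟩ := p.prod_multiset_X_sub_C_dvd
  rw [hroots] at hq
  have hqne : q ≠ 0 := fun h => hp0 (by rw [hq, h, mul_zero])
  have hm : (({r1, r2, r3} : Multiset ℝ).map fun a => X - C a).prod
      = (X - C r1) * ((X - C r2) * (X - C r3)) := by
    simp [Multiset.map_cons, Multiset.prod_cons]
  -- q has no real roots
  have hqroots : q.roots = 0 := by
    have hmul : ((({r1, r2, r3} : Multiset ℝ).map fun a => X - C a).prod * q).roots
        = ({r1, r2, r3} : Multiset ℝ) + q.roots := by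
      rw [roots_mul (hq ▸ hp0), roots_multiset_prod_X_sub_C]
    rw [← hq, hroots] at hmul
    have hcnt := congrArg Multiset.card hmul
    simp only [Multiset.card_add, Multiset.insert_eq_cons, Multiset.card_cons,
      Multiset.card_singleton] at hcnt
    exact Multiset.card_eq_zero.mp (by omega)
  have hqnoroot : ∀ x : ℝ, q.eval x ≠ 0 := by
    intro x hx
    have : x ∈ q.roots := (mem_roots hqne).2 hx
    rw [hqroots] at this
    exact absurd this (Multiset.notMem_zero x)
  -- degree of q
  have hmne : ((X - C r1) * ((X - C r2) * (X - C r3)) : ℝ[X]) ≠ 0 :=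
    mul_ne_zero (X_sub_C_ne_zero r1) (mul_ne_zero (X_sub_C_ne_zero r2) (X_sub_C_ne_zero r3))
  have hq' : p = (X - C r1) * ((X - C r2) * (X - C r3)) * q := by rw [hq, hm]
  have hdq : q.natDegree = 2 := by
    have h := congrArg natDegree hq'
    rw [natDegree_mul hmne hqne, natDegree_mul (X_sub_C_ne_zero r1)
      (mul_ne_zero (X_sub_C_ne_zero r2) (X_sub_C_ne_zero r3)),
      natDegree_mul (X_sub_C_ne_zero r2) (X_sub_C_ne_zero r3),
      natDegree_X_sub_C, natDegree_X_sub_C, natDegree_X_sub_C, hdeg] at h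
    omega
  obtain ⟨b0, b1, b2, hqe⟩ : ∃ b0 b1 b2 : ℝ, q = C b0 + C b1 * X + C b2 * X ^ 2 := by
    refine ⟨q.coeff 0, q.coeff 1, q.coeff 2, ?_⟩
    have h3 : q.natDegree < 3 := by omega
    rw [q.as_sum_range' 3 h3]
    simp [Finset.sum_range_succ, ← C_mul_X_pow_eq_monomial]
  -- evaluation identity
  have hE : ∀ x : ℝ, a0 + a1*x + a2*x^2 + a3*x^3 + a4*x^4 + a5*x^5
      = (x - r1) * ((x - r2) * (x - r3)) * (b0 + b1*x + b2*x^2) := by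
    intro x
    have he1 := congrArg (eval x) hp
    have he2 := congrArg (eval x) hq'
    rw [hqe] at he2
    simp at he1 he2
    rw [he1] at he2
    linarith [he2]
  have E0 := hE 0
  have E1 := hE 1
  have Em1 := hE (-1)
  have E2 := hE 2
  have Em2 := hE (-2)
  have E3 := hE 3
  have hc5 : a5 = b2 := by
    linear_combination (-1/12)*E0 + (1/12)*E1 + (1/24)*Em1 + (-1/24)*E2 + (-1/120)*Em2 + (1/120)*E3
  have hc4 : a4 = b1 - (r1 + r2 + r3) * b2 := by
    linear_combination (1/4)*E0 + (-1/6)*E1 + (-1/6)*Em1 + (1/24)*E2 + (1/24)*Em2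
  have hc3 : a3 = b0 - (r1 + r2 + r3) * b1 + (r1*r2 + r1*r3 + r2*r3) * b2 := by
    linear_combination (5/12)*E0 + (-7/12)*E1 + (-1/24)*Em1 + (7/24)*E2 + (-1/24)*Em2 + (-1/24)*E3
  have hc1 : a1 = (r1*r2 + r1*r3 + r2*r3) * b0 - r1*r2*r3 * b1 := by
    linear_combination (-1/3)*E0 + E1 + (-1/2)*Em1 + (-1/4)*E2 + (1/20)*Em2 + (1/30)*E3
  have hb2lt : b2 < 0 := by rw [← hc5]; exact h5
  have hdisc : b1 ^ 2 < 4 * b2 * b0 := by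
    by_contra hcon
    push_neg at hcon
    have hd : 0 ≤ discrim b2 b1 b0 := by rw [discrim]; linarith
    obtain ⟨x, hx⟩ := exists_quadratic_eq_zero (ne_of_lt hb2lt)
      ⟨Real.sqrt (discrim b2 b1 b0), (Real.mul_self_sqrt hd).symm⟩
    apply hqnoroot x
    rw [hqe]
    simp only [eval_add, eval_mul, eval_C, eval_X, eval_pow]
    linear_combination hx
  exact key_contra r1 r2 r3 b0 b1 b2 hr1 hr2 hr3 hb2lt hdisc
    (by rw [← hc4]; exact h4) (by rw [← hc3]; exact h3) (by rw [← hc1]; exact h1)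
end

section
/- Let p(x) = a₀ + a₁x + a₂x² + a₃x³ + a₄x⁴ + a₅x⁵ + a₆x⁶ be a real polynomial with a₀ > 0, a₁ > 0, a₂ < 0, a₃ > 0, a₄ < 0, a₅ > 0, a₆ > 0. If p has no negative real roots, then the number of positive real roots of p counted with multiplicity is neither 2 nor 4. -/
open Polynomial

/-- Impossibility for degree 6: a polynomial with sign sequence `+,+,-,+,-,+,+`
(constant term first) and no negative roots cannot have exactly 2 or exactly 4
positive roots counted with multiplicity. -/
theorem deg6_sign_sequence_impossibility_1
    (a₀ a₁ a₂ a₃ a₄ a₅ a₆ : ℝ)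
    (h₀ : 0 < a₀) (h₁ : 0 < a₁) (h₂ : a₂ < 0) (h₃ : 0 < a₃)
    (h₄ : a₄ < 0) (h₅ : 0 < a₅) (h₆ : 0 < a₆)
    (p : Polynomial ℝ)
    (hp : p = C a₀ + C a₁ * X + C a₂ * X ^ 2 + C a₃ * X ^ 3 + C a₄ * X ^ 4
      + C a₅ * X ^ 5 + C a₆ * X ^ 6)
    (hneg : ∀ x : ℝ, x < 0 → p.eval x ≠ 0) :
    Multiset.card (p.roots.filter (fun x => 0 < x)) ≠ 2 ∧
    Multiset.card (p.roots.filter (fun x => 0 < x)) ≠ 4 := by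
  have h0 : p.eval 0 = a₀ := by simp [hp]
  have hnopos : ∀ r : ℝ, 0 < r → p.eval r = 0 → False := by
    intro r hr hroot
    have hve : p.eval r = a₀ + a₁*r + a₂*r^2 + a₃*r^3 + a₄*r^4 + a₅*r^5 + a₆*r^6 := by
      simp only [hp, eval_add, eval_mul, eval_pow, eval_C, eval_X]; try ring
    have hvn : p.eval (-r) = a₀ - a₁*r + a₂*r^2 - a₃*r^3 + a₄*r^4 - a₅*r^5 + a₆*r^6 := by
      simp only [hp, eval_add, eval_mul, eval_pow, eval_C, eval_X]; try ring
    have hnegval : p.eval (-r) < 0 := by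
      rw [hvn]
      have hO : 0 < a₁*r + a₃*r^3 + a₅*r^5 := by
        have := pow_pos hr 3
        have := pow_pos hr 5
        have := mul_pos h₁ hr
        nlinarith
      nlinarith [hve ▸ hroot]
    have hsub := intermediate_value_Icc (by linarith : -r ≤ (0:ℝ)) p.continuous.continuousOn
    have h0mem : (0:ℝ) ∈ Set.Icc (p.eval (-r)) (p.eval 0) := by
      exact ⟨by linarith, by rw [h0]; linarith⟩
    obtain ⟨c, hc, hc0⟩ := hsub h0mem
    simp only at hc0
    have hcneg : c < 0 := by
      rcases lt_or_eq_of_le hc.2 with h | h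
      · exact h
      · exfalso; rw [h, h0] at hc0; linarith
    exact hneg c hcneg hc0
  have hfilter : p.roots.filter (fun x => 0 < x) = 0 := by
    rw [Multiset.filter_eq_nil]
    intro x hx hpos
    exact hnopos x hpos (Polynomial.mem_roots'.1 hx).2
  rw [hfilter]
  simp
end

section
/- Let p(x) = a₀ + a₁x + a₂x² + a₃x³ + a₄x⁴ + a₅x⁵ + a₆x⁶ be a real polynomial with a₀ > 0, a₁ > 0, a₂ > 0, a₃ > 0, a₄ < 0, a₅ > 0, a₆ > 0. If p has no negative real roots, then the number of positive real roots of p counted with multiplicity is not 2. -/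
open Polynomial

/-- Impossibility for degree 6: a polynomial with sign sequence `+,+,+,+,-,+,+`
(constant term first) and no negative roots cannot have exactly 2 positive
roots counted with multiplicity. -/
theorem deg6_sign_sequence_impossibility_2
    (a₀ a₁ a₂ a₃ a₄ a₅ a₆ : ℝ)
    (h₀ : 0 < a₀) (h₁ : 0 < a₁) (h₂ : 0 < a₂) (h₃ : 0 < a₃)
    (h₄ : a₄ < 0) (h₅ : 0 < a₅) (h₆ : 0 < a₆)
    (p : Polynomial ℝ)
    (hp : p = C a₀ + C a₁ * X + C a₂ * X ^ 2 + C a₃ * X ^ 3 + C a₄ * X ^ 4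
      + C a₅ * X ^ 5 + C a₆ * X ^ 6)
    (hneg : ∀ x : ℝ, x < 0 → p.eval x ≠ 0) :
    Multiset.card (p.roots.filter (fun x => 0 < x)) ≠ 2 := by
  have heval : ∀ x : ℝ, p.eval x
      = a₀ + a₁*x + a₂*x^2 + a₃*x^3 + a₄*x^4 + a₅*x^5 + a₆*x^6 := by
    intro x; simp [hp]
  intro hcard
  -- get a positive root t
  have hpos : 0 < Multiset.card (p.roots.filter (fun x => 0 < x)) := by
    rw [hcard]; norm_num
  obtain ⟨t, ht⟩ := Multiset.card_pos_iff_exists_mem.mp hpos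
  rw [Multiset.mem_filter] at ht
  obtain ⟨htr, htpos⟩ := ht
  have hp0 : p ≠ 0 := by
    intro h
    have := heval 0
    rw [h] at this
    simp at this
    nlinarith
  have hroot : p.eval t = 0 := by
    exact (Polynomial.mem_roots hp0).mp htr
  -- p(-t) < 0
  have hnegval : p.eval (-t) < 0 := by
    have h1 := heval t
    have h2 := heval (-t)
    rw [hroot] at h1
    nlinarith [pow_pos htpos 3, pow_pos htpos 5, pow_pos htpos 2,
      pow_pos htpos 4, pow_pos htpos 6, mul_pos h₁ htpos]
  -- choose s large with p(-s) > 0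
  set s : ℝ := max (t + 1) ((a₁ + a₃ - a₄ + a₅) / a₆ + 1) with hs
  have hst : t + 1 ≤ s := le_max_left _ _
  have hs1 : 1 ≤ s := by
    have := le_max_left (t + 1) ((a₁ + a₃ - a₄ + a₅) / a₆ + 1)
    linarith [htpos.le]
  have hsC : a₁ + a₃ - a₄ + a₅ < a₆ * s := by
    have h := le_max_right (t + 1) ((a₁ + a₃ - a₄ + a₅) / a₆ + 1)
    have : (a₁ + a₃ - a₄ + a₅) / a₆ < s := by linarith
    calc a₁ + a₃ - a₄ + a₅ = a₆ * ((a₁ + a₃ - a₄ + a₅) / a₆) := by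
          field_simp
      _ < a₆ * s := by exact (mul_lt_mul_iff_right₀ h₆).mpr this
  have hsposval : 0 < p.eval (-s) := by
    rw [heval]
    have h5 : s^5 * (a₁ + a₃ - a₄ + a₅) < s^5 * (a₆ * s) := by
      have : (0:ℝ) < s^5 := by positivity
      exact (mul_lt_mul_iff_right₀ this).mpr hsC
    have e1 : a₁ * s ≤ a₁ * s^5 := by nlinarith [pow_le_pow_right₀ hs1 (by norm_num : 1 ≤ 5)]
    have e3 : a₃ * s^3 ≤ a₃ * s^5 := by nlinarith [pow_le_pow_right₀ hs1 (by norm_num : 3 ≤ 5)]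
    have e4 : -a₄ * s^4 ≤ -a₄ * s^5 := by nlinarith [pow_le_pow_right₀ hs1 (by norm_num : 4 ≤ 5)]
    have hs2 : (0:ℝ) ≤ s^2 := sq_nonneg s
    have hs4 : (0:ℝ) ≤ s^4 := by positivity
    nlinarith
  -- IVT gives a root in [-s, -t]
  have hle : (-s : ℝ) ≤ -t := by linarith
  have hcont : ContinuousOn (fun x => p.eval x) (Set.Icc (-s) (-t)) :=
    (p.continuous_aeval.continuousOn)
  have h0mem : (0:ℝ) ∈ Set.Icc (p.eval (-t)) (p.eval (-s)) :=
    ⟨hnegval.le, hsposval.le⟩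
  obtain ⟨x, hxmem, hx0⟩ := intermediate_value_Icc' hle hcont h0mem
  exact hneg x (by linarith [hxmem.2]) hx0
end

section
/- Let p(x) = a₀ + a₁x + a₂x² + a₃x³ + a₄x⁴ + a₅x⁵ + a₆x⁶ be a real polynomial with a₀ > 0, a₁ > 0, a₂ < 0, a₃ < 0, a₄ < 0, a₅ < 0, a₆ > 0. If p has no positive real roots, then the number of negative real roots of p counted with multiplicity is not 4. -/
set_option maxHeartbeats 1600000


open Polynomial

private lemma newton2 (r1 r2 r3 r4 : ℝ) :
    9*(r1+r2+r3+r4)*(r1*r2*r3+r1*r2*r4+r1*r3*r4+r2*r3*r4)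
      ≤ 4*(r1*r2+r1*r3+r1*r4+r2*r3+r2*r4+r3*r4)^2 := by
  nlinarith [sq_nonneg (r1*r2 - r3*r4), sq_nonneg (r1*r3 - r2*r4), sq_nonneg (r1*r4 - r2*r3),
    sq_nonneg (r1*r2 + r3*r4 - r1*r3 - r2*r4), sq_nonneg (r1*r2 + r3*r4 - r1*r4 - r2*r3),
    sq_nonneg (r1*r3 + r2*r4 - r1*r4 - r2*r3),
    sq_nonneg (r1*(r2-r3)), sq_nonneg (r1*(r2-r4)), sq_nonneg (r1*(r3-r4)),
    sq_nonneg (r2*(r3-r4)), sq_nonneg (r2*(r1-r3)), sq_nonneg (r3*(r1-r2)),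
    sq_nonneg (r2*(r1-r4)), sq_nonneg (r3*(r1-r4)), sq_nonneg (r3*(r2-r4)),
    sq_nonneg (r4*(r1-r2)), sq_nonneg (r4*(r1-r3)), sq_nonneg (r4*(r2-r3))]

lemma key (r1 r2 r3 r4 b0 b1 b2 : ℝ)
    (hr1 : 0 < r1) (hr2 : 0 < r2) (hr3 : 0 < r3) (hr4 : 0 < r4) (hb2 : 0 < b2)
    (hdisc : b1^2 < 4*b2*b0)
    (h5 : b1 + b2*(r1+r2+r3+r4) < 0)
    (h2 : b0*(r1*r2+r1*r3+r1*r4+r2*r3+r2*r4+r3*r4)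
        + b1*(r1*r2*r3+r1*r2*r4+r1*r3*r4+r2*r3*r4)
        + b2*(r1*r2*r3*r4) < 0) : False := by
  set e1 := r1+r2+r3+r4 with he1
  set e2 := r1*r2+r1*r3+r1*r4+r2*r3+r2*r4+r3*r4 with he2
  set e3 := r1*r2*r3+r1*r2*r4+r1*r3*r4+r2*r3*r4 with he3
  set e4 := r1*r2*r3*r4 with he4
  have he1p : 0 < e1 := by positivity
  have he2p : 0 < e2 := by positivity
  have he3p : 0 < e3 := by positivity
  have he4p : 0 < e4 := by positivity
  have hb0 : 0 < b0 := by nlinarith [sq_nonneg b1]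
  have hb1 : b1 < -(b2*e1) := by linarith
  have hb1n : b1 < 0 := by nlinarith
  -- b1^2 > b2^2 e1^2, so b2 e1^2 < 4 b0
  have h1 : b2*e1^2 < 4*b0 := by nlinarith [mul_pos hb2 he1p]
  -- from h2: (-b1) e3 > b0 e2 + b2 e4 > b0 e2 ; multiply by (-b1)
  have h3 : e1*e2 < 4*e3 := by nlinarith [mul_pos hb0 he2p, mul_pos hb2 he4p,
    (mul_pos (mul_pos hb2 he1p) (mul_pos hb0 he2p)), mul_pos hb0 he3p]
  have hN2 : 9*e1*e3 ≤ 4*e2^2 := by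
    have := newton2 r1 r2 r3 r4; rw [← he1, ← he2, ← he3] at this; linarith
  have hN1 : 8*e2 ≤ 3*e1^2 := by
    rw [he1, he2]; nlinarith [sq_nonneg (r1-r2), sq_nonneg (r1-r3), sq_nonneg (r1-r4),
      sq_nonneg (r2-r3), sq_nonneg (r2-r4), sq_nonneg (r3-r4)]
  -- e1^2 e2 < 4 e1 e3 ≤ (16/9) e2^2 ⇒ 9 e1^2 < 16 e2, contradiction with hN1
  nlinarith [mul_pos he1p he2p, mul_lt_mul_of_pos_left h3 he1p, sq_nonneg e1]

/-- Impossibility for degree 6: a polynomial with sign sequence `+,+,-,-,-,-,+`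
(constant term first) and no positive roots cannot have exactly 4 negative
roots counted with multiplicity, i.e. `(P, N) = (0, 4)` is impossible. -/
theorem deg6_sign_sequence_impossibility_3
    (a₀ a₁ a₂ a₃ a₄ a₅ a₆ : ℝ)
    (h₀ : 0 < a₀) (h₁ : 0 < a₁) (h₂ : a₂ < 0) (h₃ : a₃ < 0)
    (h₄ : a₄ < 0) (h₅ : a₅ < 0) (h₆ : 0 < a₆)
    (p : Polynomial ℝ)
    (hp : p = C a₀ + C a₁ * X + C a₂ * X ^ 2 + C a₃ * X ^ 3 + C a₄ * X ^ 4
      + C a₅ * X ^ 5 + C a₆ * X ^ 6)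
    (hpos : ∀ x : ℝ, 0 < x → p.eval x ≠ 0) :
    Multiset.card (p.roots.filter (fun x => x < 0)) ≠ 4 := by
  intro hN
  have hpne : p ≠ 0 := fun h => hpos 1 one_pos (by simp [h])
  have hdeg : p.natDegree = 6 := by
    rw [hp]; compute_degree!
    exact ne_of_gt h₆
  set s := p.roots.filter (fun x => x < 0) with hs
  have hsle : s ≤ p.roots := Multiset.filter_le _ _
  have hneg : ∀ x ∈ s, x < 0 := fun x hx => (Multiset.mem_filter.mp hx).2
  obtain ⟨x1, hm1⟩ := Multiset.card_pos_iff_exists_mem.mp (by rw [hN]; norm_num)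
  obtain ⟨t1, hst1⟩ := Multiset.exists_cons_of_mem hm1
  have hc1 : Multiset.card t1 = 3 := by
    have := hN; rw [hst1, Multiset.card_cons] at this; omega
  obtain ⟨x2, hm2⟩ := Multiset.card_pos_iff_exists_mem.mp (by rw [hc1]; norm_num)
  obtain ⟨t2, hst2⟩ := Multiset.exists_cons_of_mem hm2
  have hc2 : Multiset.card t2 = 2 := by
    have := hc1; rw [hst2, Multiset.card_cons] at this; omega
  obtain ⟨x3, hm3⟩ := Multiset.card_pos_iff_exists_mem.mp (by rw [hc2]; norm_num)
  obtain ⟨t3, hst3⟩ := Multiset.exists_cons_of_mem hm3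
  have hc3 : Multiset.card t3 = 1 := by
    have := hc2; rw [hst3, Multiset.card_cons] at this; omega
  obtain ⟨x4, hm4⟩ := Multiset.card_pos_iff_exists_mem.mp (by rw [hc3]; norm_num)
  obtain ⟨t4, hst4⟩ := Multiset.exists_cons_of_mem hm4
  have hc4 : Multiset.card t4 = 0 := by
    have := hc3; rw [hst4, Multiset.card_cons] at this; omega
  have ht4 : t4 = 0 := Multiset.card_eq_zero.mp hc4
  have hsx : s = x1 ::ₘ x2 ::ₘ x3 ::ₘ x4 ::ₘ 0 := by
    rw [hst1, hst2, hst3, hst4, ht4]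
  have hx1 : x1 < 0 := hneg _ (by rw [hsx]; simp)
  have hx2 : x2 < 0 := hneg _ (by rw [hsx]; simp)
  have hx3 : x3 < 0 := hneg _ (by rw [hsx]; simp)
  have hx4 : x4 < 0 := hneg _ (by rw [hsx]; simp)
  obtain ⟨q, hq⟩ := (Multiset.prod_X_sub_C_dvd_iff_le_roots hpne s).mpr hsle
  have hprod : (s.map fun a => X - C a).prod
      = (X - C x1) * (X - C x2) * (X - C x3) * (X - C x4) := by
    rw [hsx]; simp only [Multiset.map_cons, Multiset.map_zero, Multiset.prod_cons,
      Multiset.prod_zero]; ring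
  have hqne : q ≠ 0 := fun h => hpne (by rw [hq, h, mul_zero])
  have hmon : ((s.map fun a => X - C a).prod).Monic := monic_multiset_prod_of_monic _ _ fun a _ => monic_X_sub_C a
  have hdq : q.natDegree = 2 := by
    have h1 := natDegree_mul hmon.ne_zero hqne
    rw [← hq, hdeg, natDegree_multiset_prod_X_sub_C_eq_card] at h1
    omega
  set b0 := q.coeff 0 with hb0d
  set b1 := q.coeff 1 with hb1d
  set b2 := q.coeff 2 with hb2d
  have hqq : q = C b0 + C b1 * X + C b2 * X ^ 2 := by
    conv_lhs => rw [q.as_sum_range_C_mul_X_pow, hdq]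
    simp only [Finset.sum_range_succ, Finset.sum_range_zero, zero_add, pow_zero, mul_one,
      pow_one]
    rfl
  have hroots : p.roots = s + q.roots := by
    rw [hq, Polynomial.roots_mul (hq ▸ hpne), roots_multiset_prod_X_sub_C]
  have hqfilter : Multiset.filter (fun x => x < 0) q.roots = 0 := by
    have h1 := hs
    rw [hroots, Multiset.filter_add, Multiset.filter_eq_self.mpr hneg] at h1
    have h2 := congrArg Multiset.card h1
    rw [Multiset.card_add] at h2
    exact Multiset.card_eq_zero.mp (by omega)
  have hqroot : ∀ y : ℝ, q.eval y ≠ 0 := by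
    intro y hy
    have hpy : p.eval y = 0 := by rw [hq, eval_mul, hy, mul_zero]
    rcases lt_trichotomy y 0 with h | h | h
    · have hyq : y ∈ q.roots := (mem_roots hqne).mpr hy
      have : y ∈ Multiset.filter (fun x => x < 0) q.roots := Multiset.mem_filter.mpr ⟨hyq, h⟩
      rw [hqfilter] at this
      exact absurd this (Multiset.notMem_zero y)
    · rw [hp, h] at hpy; simp at hpy; linarith
    · exact hpos y h hpy
  have hfact : p = (X - C x1) * (X - C x2) * (X - C x3) * (X - C x4) * q := by
    rw [hq, hprod]
  have hbig : C a₀ + C a₁ * X + C a₂ * X ^ 2 + C a₃ * X ^ 3 + C a₄ * X ^ 4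
      + C a₅ * X ^ 5 + C a₆ * X ^ 6
      = C (b0*(x1*x2*x3*x4))
      + C (b1*(x1*x2*x3*x4) - b0*(x1*x2*x3 + x1*x2*x4 + x1*x3*x4 + x2*x3*x4)) * X
      + C (b2*(x1*x2*x3*x4) - b1*(x1*x2*x3 + x1*x2*x4 + x1*x3*x4 + x2*x3*x4)
          + b0*(x1*x2 + x1*x3 + x1*x4 + x2*x3 + x2*x4 + x3*x4)) * X ^ 2
      + C (-(b2*(x1*x2*x3 + x1*x2*x4 + x1*x3*x4 + x2*x3*x4))
          + b1*(x1*x2 + x1*x3 + x1*x4 + x2*x3 + x2*x4 + x3*x4)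
          - b0*(x1 + x2 + x3 + x4)) * X ^ 3
      + C (b2*(x1*x2 + x1*x3 + x1*x4 + x2*x3 + x2*x4 + x3*x4)
          - b1*(x1 + x2 + x3 + x4) + b0) * X ^ 4
      + C (-(b2*(x1 + x2 + x3 + x4)) + b1) * X ^ 5
      + C b2 * X ^ 6 := by
    rw [← hp, hfact, hqq]
    simp only [map_mul, map_add, map_sub, map_neg]
    ring
  have e6 : a₆ = b2 := by
    have := congrArg (fun f => Polynomial.coeff f 6) hbig
    simp only [Polynomial.coeff_add, Polynomial.coeff_C_mul, Polynomial.coeff_X_pow,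
      Polynomial.coeff_C, Polynomial.coeff_X] at this
    norm_num at this
    linarith [this]
  have e5 : a₅ = -(b2*(x1 + x2 + x3 + x4)) + b1 := by
    have := congrArg (fun f => Polynomial.coeff f 5) hbig
    simp only [Polynomial.coeff_add, Polynomial.coeff_C_mul, Polynomial.coeff_X_pow,
      Polynomial.coeff_C, Polynomial.coeff_X] at this
    norm_num at this
    linarith [this]
  have e2 : a₂ = b2*(x1*x2*x3*x4) - b1*(x1*x2*x3 + x1*x2*x4 + x1*x3*x4 + x2*x3*x4)
      + b0*(x1*x2 + x1*x3 + x1*x4 + x2*x3 + x2*x4 + x3*x4) := by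
    have := congrArg (fun f => Polynomial.coeff f 2) hbig
    simp only [Polynomial.coeff_add, Polynomial.coeff_C_mul, Polynomial.coeff_X_pow,
      Polynomial.coeff_C, Polynomial.coeff_X] at this
    norm_num at this
    linarith [this]
  have hb2 : 0 < b2 := e6 ▸ h₆
  have hdisc : b1 ^ 2 < 4 * b2 * b0 := by
    by_contra hcon
    push_neg at hcon
    have hd : 0 ≤ discrim b2 b1 b0 := by rw [discrim]; linarith
    obtain ⟨x, hx⟩ := exists_quadratic_eq_zero (ne_of_gt hb2)
      ⟨Real.sqrt (discrim b2 b1 b0), (Real.mul_self_sqrt hd).symm⟩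
    exact hqroot x (by rw [hqq]; simp; linear_combination hx)
  exact key (-x1) (-x2) (-x3) (-x4) b0 b1 b2 (by linarith) (by linarith) (by linarith)
    (by linarith) hb2 hdisc (by linarith [e5]) (by nlinarith [e2])
end

section
/- Let x₁, x₂, x₃, x₄ be positive real numbers and set α = x₁+x₂+x₃+x₄, β = x₁x₂+x₁x₃+x₂x₃+x₁x₄+x₂x₄+x₃x₄, γ = x₁x₂x₃+x₁x₂x₄+x₁x₃x₄+x₂x₃x₄, δ = x₁x₂x₃x₄. Then there do not exist real numbers b, c with 4c > b² > 0 such that both c·β − b·γ + δ < 0 and α − b < 0. -/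
lemma deg6_core_key (u v s t b c : ℝ) (hu : 0 < u) (hv : 0 < v)
    (hs : 0 < s) (ht : 0 < t) (hub : 4 * u ≤ s ^ 2) (hvb : 4 * v ≤ t ^ 2)
    (hb : s + t < b) (hc : b ^ 2 < 4 * c) :
    0 < c * (u + v + s * t) - b * (u * t + v * s) + u * v := by
  have hcb : 0 < 4 * c - b ^ 2 := by linarith
  have h1 : u * (4 * c - 4 * b * t) ≥ -(s ^ 2 * t ^ 2) := by
    nlinarith [mul_pos hu hcb, mul_nonneg hu.le (sq_nonneg (b - 2 * t)),
      mul_le_mul_of_nonneg_right hub (sq_nonneg t)]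
  have h2 : v * (4 * c - 4 * b * s) ≥ -(s ^ 2 * t ^ 2) := by
    nlinarith [mul_pos hv hcb, mul_nonneg hv.le (sq_nonneg (b - 2 * s)),
      mul_le_mul_of_nonneg_right hvb (sq_nonneg s)]
  have hbst : (s + t) ^ 2 < b ^ 2 := by nlinarith
  have h3 : 4 * c * (s * t) > 4 * (s ^ 2 * t ^ 2) := by
    nlinarith [mul_pos (mul_pos hs ht) hcb,
      mul_pos (mul_pos hs ht) (show 0 < b ^ 2 - (s + t) ^ 2 by linarith),
      mul_nonneg (mul_pos hs ht).le (sq_nonneg (s - t))]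
  nlinarith [mul_pos hu hv, h1, h2, h3]

/-- The core algebraic fact behind the impossibility of `(P, N) = (0, 4)` for
degree 6 sign sequence `+,+,-,-,-,-,+`: with `α, β, γ, δ` the elementary
symmetric polynomials of positive reals `x₁, x₂, x₃, x₄`, there are no reals
`b, c` with `4c > b² > 0`, `cβ - bγ + δ < 0` and `α - b < 0`. -/
theorem deg6_core_inequality
    (x₁ x₂ x₃ x₄ : ℝ)
    (h₁ : 0 < x₁) (h₂ : 0 < x₂) (h₃ : 0 < x₃) (h₄ : 0 < x₄)
    (α β γ δ : ℝ)
    (hα : α = x₁ + x₂ + x₃ + x₄)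
    (hβ : β = x₁ * x₂ + x₁ * x₃ + x₂ * x₃ + x₁ * x₄ + x₂ * x₄ + x₃ * x₄)
    (hγ : γ = x₁ * x₂ * x₃ + x₁ * x₂ * x₄ + x₁ * x₃ * x₄ + x₂ * x₃ * x₄)
    (hδ : δ = x₁ * x₂ * x₃ * x₄) :
    ¬ ∃ b c : ℝ, b ^ 2 < 4 * c ∧ 0 < b ^ 2 ∧
      c * β - b * γ + δ < 0 ∧ α - b < 0 := by
  rintro ⟨b, c, hbc, hb2, hneg, hab⟩
  rw [hα] at hab
  have key := deg6_core_key (x₁ * x₂) (x₃ * x₄) (x₁ + x₂) (x₃ + x₄) b c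
    (mul_pos h₁ h₂) (mul_pos h₃ h₄) (by linarith) (by linarith)
    (by nlinarith [sq_nonneg (x₁ - x₂)]) (by nlinarith [sq_nonneg (x₃ - x₄)])
    (by linarith) hbc
  rw [hβ, hγ, hδ] at hneg
  nlinarith [key]
end

section
/- Let x₁, x₂, x₃, x₄ be positive real numbers and let α, β, γ, δ denote their elementary symmetric polynomials of degrees 1, 2, 3, 4 respectively. Then the following three inequalities hold: γ² − βδ > 0; αβ − 2γ > 0; and α²β − 4αγ + 4δ > 0. -/
/-- Key positivity facts for elementary symmetric polynomials of four positive
reals, used in the proof that `(P, N) = (0, 4)` is impossible for degree 6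
polynomials with sign sequence `+,+,-,-,-,-,+`. -/
theorem elementary_symmetric_inequalities
    (x₁ x₂ x₃ x₄ : ℝ)
    (h₁ : 0 < x₁) (h₂ : 0 < x₂) (h₃ : 0 < x₃) (h₄ : 0 < x₄)
    (α β γ δ : ℝ)
    (hα : α = x₁ + x₂ + x₃ + x₄)
    (hβ : β = x₁ * x₂ + x₁ * x₃ + x₂ * x₃ + x₁ * x₄ + x₂ * x₄ + x₃ * x₄)
    (hγ : γ = x₁ * x₂ * x₃ + x₁ * x₂ * x₄ + x₁ * x₃ * x₄ + x₂ * x₃ * x₄)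
    (hδ : δ = x₁ * x₂ * x₃ * x₄) :
    0 < γ ^ 2 - β * δ ∧ 0 < α * β - 2 * γ ∧
      0 < α ^ 2 * β - 4 * α * γ + 4 * δ := by
  subst hα hβ hγ hδ
  refine ⟨?_, ?_, ?_⟩
  · have h : (x₁ * x₂ * x₃ + x₁ * x₂ * x₄ + x₁ * x₃ * x₄ + x₂ * x₃ * x₄) ^ 2 -
      (x₁ * x₂ + x₁ * x₃ + x₂ * x₃ + x₁ * x₄ + x₂ * x₄ + x₃ * x₄) * (x₁ * x₂ * x₃ * x₄) =
      x₂^2*x₃^2*x₄^2 + x₁*x₂*x₃^2*x₄^2 + x₁*x₂^2*x₃*x₄^2 + x₁*x₂^2*x₃^2*x₄ +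
      x₁^2*x₃^2*x₄^2 + x₁^2*x₂*x₃*x₄^2 + x₁^2*x₂*x₃^2*x₄ + x₁^2*x₂^2*x₄^2 +
      x₁^2*x₂^2*x₃*x₄ + x₁^2*x₂^2*x₃^2 := by ring
    rw [h]; positivity
  · have h : (x₁ + x₂ + x₃ + x₄) * (x₁ * x₂ + x₁ * x₃ + x₂ * x₃ + x₁ * x₄ + x₂ * x₄ + x₃ * x₄) -
      2 * (x₁ * x₂ * x₃ + x₁ * x₂ * x₄ + x₁ * x₃ * x₄ + x₂ * x₃ * x₄) =
      x₃*x₄^2 + x₃^2*x₄ + x₂*x₄^2 + x₂*x₃*x₄ + x₂*x₃^2 + x₂^2*x₄ + x₂^2*x₃ + x₁*x₄^2 +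
      x₁*x₃*x₄ + x₁*x₃^2 + x₁*x₂*x₄ + x₁*x₂*x₃ + x₁*x₂^2 + x₁^2*x₄ + x₁^2*x₃ + x₁^2*x₂ := by
      ring
    rw [h]; positivity
  · have h : (x₁ + x₂ + x₃ + x₄) ^ 2 * (x₁ * x₂ + x₁ * x₃ + x₂ * x₃ + x₁ * x₄ + x₂ * x₄ + x₃ * x₄) -
      4 * (x₁ + x₂ + x₃ + x₄) * (x₁ * x₂ * x₃ + x₁ * x₂ * x₄ + x₁ * x₃ * x₄ + x₂ * x₃ * x₄) +
      4 * (x₁ * x₂ * x₃ * x₄) =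
      x₃*x₄^3 + 2*x₃^2*x₄^2 + x₃^3*x₄ + x₂*x₄^3 + x₂*x₃*x₄^2 + x₂*x₃^2*x₄ + x₂*x₃^3 +
      2*x₂^2*x₄^2 + x₂^2*x₃*x₄ + 2*x₂^2*x₃^2 + x₂^3*x₄ + x₂^3*x₃ + x₁*x₄^3 + x₁*x₃*x₄^2 +
      x₁*x₃^2*x₄ + x₁*x₃^3 + x₁*x₂*x₄^2 + x₁*x₂*x₃^2 + x₁*x₂^2*x₄ + x₁*x₂^2*x₃ + x₁*x₂^3 +
      2*x₁^2*x₄^2 + x₁^2*x₃*x₄ + 2*x₁^2*x₃^2 + x₁^2*x₂*x₄ + x₁^2*x₂*x₃ + 2*x₁^2*x₂^2 +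
      x₁^3*x₄ + x₁^3*x₃ + x₁^3*x₂ := by ring
    rw [h]; positivity
end

section
/- Let 0 < x₁ < x₂ < … < xₘ be positive real numbers and α₁ < α₂ < … < αₘ be real numbers. Then the m×m generalized Vandermonde matrix whose (i,j) entry is xᵢ^{αⱼ} (real power) has nonzero determinant. -/
/-- Key lemma: a linear combination of distinct real-power functions that
vanishes at `m` distinct positive points has all coefficients zero. -/
lemma rpow_comb_eq_zero :
    ∀ (m : ℕ) (α c x : Fin m → ℝ), StrictMono α → StrictMono x →
      (∀ i, 0 < x i) → (∀ i, ∑ j, c j * (x i) ^ (α j) = 0) → ∀ j, c j = 0 := by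
  intro m
  induction m with
  | zero => intro _ _ _ _ _ _ _ j; exact j.elim0
  | succ n ih =>
    intro α c x hα hx hpos hz
    set g : ℝ → ℝ := fun t => ∑ j, c j * t ^ (α j - α 0) with hgdef
    have hgz : ∀ i, g (x i) = 0 := by
      intro i
      have h1 : g (x i) = (∑ j, c j * (x i) ^ (α j)) * (x i) ^ (-(α 0)) := by
        rw [Finset.sum_mul]
        refine Finset.sum_congr rfl fun j _ => ?_
        rw [mul_assoc, ← Real.rpow_add (hpos i), ← sub_eq_add_neg]
      rw [h1, hz i, zero_mul]
    have hderiv : ∀ t : ℝ, 0 < t →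
        HasDerivAt g (∑ j, c j * ((α j - α 0) * t ^ (α j - α 0 - 1))) t := by
      intro t ht
      exact HasDerivAt.fun_sum fun j _ =>
        (Real.hasDerivAt_rpow_const (Or.inl ht.ne')).const_mul (c j)
    have hrolle : ∀ i : Fin n, ∃ z, z ∈ Set.Ioo (x i.castSucc) (x i.succ) ∧
        (∑ j, c j * ((α j - α 0) * z ^ (α j - α 0 - 1))) = 0 := by
      intro i
      have hab : x i.castSucc < x i.succ := hx (Fin.castSucc_lt_succ : i.castSucc < i.succ)
      have hcont : ContinuousOn g (Set.Icc (x i.castSucc) (x i.succ)) := by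
        intro t ht
        exact (hderiv t (lt_of_lt_of_le (hpos i.castSucc) ht.1)).continuousAt.continuousWithinAt
      have hdiff : ∀ t ∈ Set.Ioo (x i.castSucc) (x i.succ),
          HasDerivAt g (∑ j, c j * ((α j - α 0) * t ^ (α j - α 0 - 1))) t :=
        fun t ht => hderiv t (lt_trans (hpos i.castSucc) ht.1)
      obtain ⟨z, hz1, hz2⟩ := exists_hasDerivAt_eq_zero hab hcont
        (by rw [hgz, hgz]) hdiff
      exact ⟨z, hz1, hz2⟩
    set z : Fin n → ℝ := fun i => (hrolle i).choose with hzdef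
    have hzmem : ∀ i, z i ∈ Set.Ioo (x i.castSucc) (x i.succ) :=
      fun i => (hrolle i).choose_spec.1
    have hzmono : StrictMono z := by
      intro i i' hii'
      have h1 : z i < x i.succ := (hzmem i).2
      have h2 : x i'.castSucc < z i' := (hzmem i').1
      have h3 : (i.succ : Fin (n+1)) ≤ i'.castSucc := by
        rw [Fin.le_def]; simp; omega
      exact lt_of_lt_of_le h1 (le_trans (hx.monotone h3) h2.le)
    have hzpos : ∀ i, 0 < z i := fun i => lt_trans (hpos i.castSucc) (hzmem i).1
    set β : Fin n → ℝ := fun j => α j.succ - α 0 - 1 with hβdef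
    set d : Fin n → ℝ := fun j => c j.succ * (α j.succ - α 0) with hddef
    have hβmono : StrictMono β := fun j j' h => by
      have := hα (Fin.succ_lt_succ_iff.mpr h)
      simp only [hβdef]; linarith
    have hhz : ∀ i, ∑ j, d j * (z i) ^ (β j) = 0 := by
      intro i
      have h0 := (hrolle i).choose_spec.2
      rw [Fin.sum_univ_succ, sub_self, zero_mul, mul_zero, zero_add] at h0
      rw [← h0]
      refine Finset.sum_congr rfl fun j _ => ?_
      simp only [hddef, hβdef]; ring
    have hd0 := ih β d z hβmono hzmono hzpos hhz
    have hcsucc : ∀ j : Fin n, c j.succ = 0 := by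
      intro j
      have h1 := hd0 j
      simp only [hddef] at h1
      rcases mul_eq_zero.mp h1 with h | h
      · exact h
      · exact absurd h (sub_ne_zero.mpr (hα (Fin.succ_pos j)).ne')
    have hc0 : c 0 = 0 := by
      have h0 := hz 0
      rw [Fin.sum_univ_succ] at h0
      have h1 : ∑ j : Fin n, c j.succ * (x 0) ^ (α j.succ) = 0 := by
        refine Finset.sum_eq_zero fun j _ => ?_
        rw [hcsucc j, zero_mul]
      rw [h1, add_zero] at h0
      rcases mul_eq_zero.mp h0 with h | h
      · exact h
      · exact absurd h (Real.rpow_pos_of_pos (hpos 0) _).ne'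
    intro j
    refine Fin.cases hc0 hcsucc j

/-- Generalized Vandermonde determinant: for `0 < x₁ < … < xₘ` and real
exponents `α₁ < … < αₘ`, the matrix with entries `xᵢ ^ αⱼ` (real powers) has
nonzero determinant. -/
theorem generalized_vandermonde_det_ne_zero
    (m : ℕ) (x : Fin m → ℝ) (hx : StrictMono x) (hxpos : ∀ i, 0 < x i)
    (α : Fin m → ℝ) (hα : StrictMono α) :
    Matrix.det (Matrix.of fun i j : Fin m => (x i) ^ (α j)) ≠ 0 := by
  intro hdet
  obtain ⟨v, hv0, hv⟩ := (Matrix.exists_mulVec_eq_zero_iff).mpr hdet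
  have hz : ∀ i, ∑ j, v j * (x i) ^ (α j) = 0 := by
    intro i
    have := congrFun hv i
    simp only [Matrix.mulVec, dotProduct, Matrix.of_apply, Pi.zero_apply] at this
    rw [← this]
    exact Finset.sum_congr rfl fun j _ => mul_comm _ _
  exact hv0 (funext (rpow_comb_eq_zero m α v x hα hx hxpos hz))
end

section
/- Let p(x) = 744 − 1286x + 559x² + 25x³ − 44x⁴ + x⁵ + x⁶. Then p(x) = (31 + 11x + x²)(1−x)(2−x)(3−x)(4−x), the multiset of positive real roots of p counted with multiplicity is {1, 2, 3, 4}, and p has no negative real roots. In particular, there exists a degree 6 real polynomial with coefficient sign sequence +,−,+,+,−,+,+ (constant term first) having exactly 4 positive roots and no negative roots. -/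
open Polynomial

lemma quad_ne_zero : (X ^ 2 + C (11:ℝ) * X + C 31) ≠ 0 := fun h => by
  have := congrArg (eval 0) h
  simp at this

lemma quad_roots : (X ^ 2 + C (11:ℝ) * X + C 31).roots = 0 := by
  refine Multiset.eq_zero_of_forall_notMem fun x hx => ?_
  rw [mem_roots quad_ne_zero] at hx
  simp [IsRoot, eval_add, eval_mul, eval_pow] at hx
  nlinarith [sq_nonneg (x + 11/2)]

lemma roots_eq (p : Polynomial ℝ)
    (hp : p = C 744 - C 1286 * X + C 559 * X ^ 2 + C 25 * X ^ 3 - C 44 * X ^ 4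
      + X ^ 5 + X ^ 6) :
    p.roots = {1, 2, 3, 4} := by
  have h : p = (X ^ 2 + C (11:ℝ) * X + C 31) *
      ((X - C 1) * (X - C 2) * (X - C 3) * (X - C 4)) := by
    rw [hp]; simp only [map_ofNat, C_1]; ring
  have hX : ∀ a : ℝ, X - C a ≠ 0 := fun a => X_sub_C_ne_zero a
  rw [h, roots_mul, roots_mul, roots_mul, roots_mul, quad_roots,
    roots_X_sub_C, roots_X_sub_C, roots_X_sub_C, roots_X_sub_C]
  · rfl
  all_goals
    first
    | exact mul_ne_zero (hX _) (hX _)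
    | exact mul_ne_zero (mul_ne_zero (hX _) (hX _)) (hX _)
    | exact mul_ne_zero (mul_ne_zero (mul_ne_zero (hX _) (hX _)) (hX _)) (hX _)
    | exact mul_ne_zero quad_ne_zero
        (mul_ne_zero (mul_ne_zero (mul_ne_zero (hX _) (hX _)) (hX _)) (hX _))

/-- The degree-6 polynomial `744 - 1286x + 559x² + 25x³ - 44x⁴ + x⁵ + x⁶`, with
sign sequence `+,-,+,+,-,+,+`, factors as `(31 + 11x + x²)(1-x)(2-x)(3-x)(4-x)`,
has positive-root multiset `{1, 2, 3, 4}` and no negative roots: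
`(P, N) = (4, 0)`. -/
theorem deg6_example_four_pos_no_neg
    (p : Polynomial ℝ)
    (hp : p = C 744 - C 1286 * X + C 559 * X ^ 2 + C 25 * X ^ 3 - C 44 * X ^ 4
      + X ^ 5 + X ^ 6) :
    p = (C 31 + C 11 * X + X ^ 2) * (C 1 - X) * (C 2 - X) * (C 3 - X)
      * (C 4 - X) ∧
    p.roots.filter (fun x => 0 < x) = {1, 2, 3, 4} ∧
    p.roots.filter (fun x => x < 0) = 0 := by
  have hr := roots_eq p hp
  refine ⟨by rw [hp]; simp only [map_ofNat, C_1]; ring, ?_, ?_⟩ <;> rw [hr] <;>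
    simp [Multiset.filter_cons, Multiset.filter_singleton]
end
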